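/- arXiv:1911.04672 — 9 statements merged into one kernel-verified Lean document; each statement's English description precedes it below -/
import Mathlib

section
/- The set of feedback gains L (of size m₂ × n) such that the pair (A - B₂L, B₁) is stabilizable is an open subset of the space of m₂ × n real matrices. -/
open Matrix

attribute [local instance] Matrix.linftyOpNormedRing Matrix.linftyOpNormedAlgebra

/-- A real square matrix is Schur stable if every complex eigenvalue has modulus `< 1`. -/
def IsSchur {n : ℕ} (M : Matrix (Fin n) (Fin n) ℝ) : Prop :=
  ∀ μ ∈ spectrum ℂ (M.map Complex.ofReal), ‖μ‖ < 1

lemma isOpen_isSchur {n : ℕ} : IsOpen {M : Matrix (Fin n) (Fin n) ℝ | IsSchur M} := by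
  rcases Nat.eq_zero_or_pos n with hn | hn
  · subst hn
    have : {M : Matrix (Fin 0) (Fin 0) ℝ | IsSchur M} = Set.univ := by
      ext M
      simp only [Set.mem_setOf_eq, Set.mem_univ, iff_true]
      intro μ hμ
      rw [spectrum.mem_iff] at hμ
      exact absurd (isUnit_of_subsingleton _) hμ
    rw [this]; exact isOpen_univ
  haveI : Nonempty (Fin n) := ⟨⟨0, hn⟩⟩
  rw [isOpen_iff_mem_nhds]
  intro M hM
  set a := M.map (Complex.ofReal) with ha
  -- spectral radius is < 1
  have hrad : spectralRadius ℂ a < 1 := by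
    rcases (spectrum ℂ a).eq_empty_or_nonempty with h | h
    · simp [spectralRadius, h]
    · obtain ⟨μ₀, hμ₀, hmax⟩ :=
        (spectrum.isCompact a).exists_isMaxOn h continuous_nnnorm.continuousOn
      have hμ₀lt : (‖μ₀‖₊ : ENNReal) < 1 := by
        have := hM μ₀ hμ₀
        exact_mod_cast this
      refine lt_of_le_of_lt ?_ hμ₀lt
      exact iSup₂_le fun μ hμ => by exact_mod_cast hmax hμ
  -- Gelfand's formula gives a power with small norm
  have hG := spectrum.pow_nnnorm_pow_one_div_tendsto_nhds_spectralRadius a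
  have hev : ∀ᶠ k : ℕ in Filter.atTop,
      (‖a ^ k‖₊ : ENNReal) ^ (1 / (k : ℝ)) < 1 :=
    hG.eventually_lt_const hrad
  obtain ⟨k, hk1, hklt⟩ := (hev.and (Filter.eventually_ge_atTop 1)).exists
  have hkpos : (0 : ℝ) < (k : ℝ) := by exact_mod_cast hklt
  have hnorm : ‖a ^ k‖ < 1 := by
    by_contra h
    push_neg at h
    have : (1 : ENNReal) ≤ (‖a ^ k‖₊ : ENNReal) ^ (1 / (k : ℝ)) := by
      apply ENNReal.one_le_rpow ?_ (by positivity)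
      exact_mod_cast h
    exact absurd hk1 this.not_gt
  -- the open neighborhood
  have hcont : Continuous fun N : Matrix (Fin n) (Fin n) ℝ =>
      ‖(N.map Complex.ofReal) ^ k‖ :=
    ((continuous_id.matrix_map Complex.continuous_ofReal).pow k).norm
  have hopen : IsOpen {N : Matrix (Fin n) (Fin n) ℝ | ‖(N.map Complex.ofReal) ^ k‖ < 1} :=
    isOpen_lt hcont continuous_const
  refine Filter.mem_of_superset (hopen.mem_nhds hnorm) ?_
  intro N hN μ hμ
  have hpow : μ ^ k ∈ spectrum ℂ ((N.map Complex.ofReal) ^ k) :=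
    spectrum.pow_image_subset _ k ⟨μ, hμ, rfl⟩
  have := spectrum.norm_le_norm_of_mem hpow
  have hlt : ‖μ‖ ^ k < 1 := by
    rw [← norm_pow]
    exact this.trans_lt hN
  have hk0 : k ≠ 0 := by omega
  exact (pow_lt_one_iff_of_nonneg (norm_nonneg _) hk0).mp hlt

/-- The set of gains `L` such that `(A - B₂ L, B₁)` is stabilizable is open. -/
theorem stabilizable_set_isOpen {n m₁ m₂ : ℕ}
    (A : Matrix (Fin n) (Fin n) ℝ) (B₁ : Matrix (Fin n) (Fin m₁) ℝ)
    (B₂ : Matrix (Fin n) (Fin m₂) ℝ) :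
    IsOpen {L : Matrix (Fin m₂) (Fin n) ℝ |
      ∃ F : Matrix (Fin m₁) (Fin n) ℝ, IsSchur (A - B₂ * L - B₁ * F)} := by
  have : {L : Matrix (Fin m₂) (Fin n) ℝ |
      ∃ F : Matrix (Fin m₁) (Fin n) ℝ, IsSchur (A - B₂ * L - B₁ * F)} =
      ⋃ F : Matrix (Fin m₁) (Fin n) ℝ,
        (fun L => A - B₂ * L - B₁ * F) ⁻¹' {M | IsSchur M} := by
    ext L; simp [Set.mem_iUnion]
  rw [this]
  refine isOpen_iUnion fun F => isOpen_isSchur.preimage ?_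
  exact ((continuous_const.sub (continuous_const.matrix_mul continuous_id)).sub continuous_const)
end

section
/- A matrix M ∈ ℝ^{n×n} is Schur stable (spectral radius < 1) if and only if there exists a positive definite symmetric matrix X such that MᵀXM - X is negative definite. -/
open Matrix Filter
open scoped ENNReal NNReal

namespace SchurAux

variable {n : ℕ}

lemma map_pow_ofReal (M : Matrix (Fin n) (Fin n) ℝ) (k : ℕ) :
    (M ^ k).map Complex.ofReal = (M.map Complex.ofReal) ^ k := by
  induction k with
  | zero => simp [Matrix.map_one]
  | succ k ih =>
    rw [pow_succ, pow_succ, ← ih]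
    exact Matrix.map_mul (f := Complex.ofRealHom)

lemma map_mul_ofReal (M N : Matrix (Fin n) (Fin n) ℝ) :
    (M * N).map Complex.ofReal = M.map Complex.ofReal * N.map Complex.ofReal :=
  Matrix.map_mul (f := Complex.ofRealHom)

lemma map_transpose_ofReal (M : Matrix (Fin n) (Fin n) ℝ) :
    Mᵀ.map Complex.ofReal = (M.map Complex.ofReal)ᵀ := by
  ext i j; rfl

lemma exists_eigen {A : Matrix (Fin n) (Fin n) ℂ} {μ : ℂ} (h : μ ∈ spectrum ℂ A) :
    ∃ v, v ≠ 0 ∧ A *ᵥ v = μ • v := by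
  rw [spectrum.mem_iff, Matrix.isUnit_iff_isUnit_det, isUnit_iff_ne_zero, not_not] at h
  obtain ⟨v, hv, hv0⟩ := (Matrix.exists_mulVec_eq_zero_iff).mpr h
  refine ⟨v, hv, ?_⟩
  rw [Algebra.algebraMap_eq_smul_one, Matrix.sub_mulVec, Matrix.smul_mulVec,
    Matrix.one_mulVec, sub_eq_zero] at hv0
  exact hv0.symm

lemma re_quad (X : Matrix (Fin n) (Fin n) ℝ) (v : Fin n → ℂ) :
    (star v ⬝ᵥ (X.map Complex.ofReal) *ᵥ v).re
      = (fun i => (v i).re) ⬝ᵥ X *ᵥ (fun i => (v i).re)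
        + (fun i => (v i).im) ⬝ᵥ X *ᵥ (fun i => (v i).im) := by
  simp only [dotProduct, mulVec, Matrix.map_apply, Pi.star_apply, RCLike.star_def]
  rw [Complex.re_sum, ← Finset.sum_add_distrib]
  refine Finset.sum_congr rfl fun i _ => ?_
  rw [Finset.mul_sum, Complex.re_sum, Finset.mul_sum, Finset.mul_sum, ← Finset.sum_add_distrib]
  refine Finset.sum_congr rfl fun j _ => ?_
  simp [Complex.mul_re, Complex.conj_re, Complex.conj_im]

lemma re_quad_pos {X : Matrix (Fin n) (Fin n) ℝ} (hX : X.PosDef) {v : Fin n → ℂ} (hv : v ≠ 0) :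
    0 < (star v ⬝ᵥ (X.map Complex.ofReal) *ᵥ v).re := by
  rw [re_quad]
  set a : Fin n → ℝ := fun i => (v i).re with ha
  set b : Fin n → ℝ := fun i => (v i).im with hb
  have hab : a ≠ 0 ∨ b ≠ 0 := by
    by_contra hc
    push_neg at hc
    apply hv
    funext i
    have h1 : a i = 0 := by rw [hc.1]; rfl
    have h2 : b i = 0 := by rw [hc.2]; rfl
    exact Complex.ext h1 h2
  rcases hab with h | h
  · have h1 := (posDef_iff_dotProduct_mulVec.mp hX).2 h
    have h2 : 0 ≤ b ⬝ᵥ X *ᵥ b := (posSemidef_iff_dotProduct_mulVec.mp hX.posSemidef).2 b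
    simp only [star_trivial] at h1 h2
    linarith
  · have h1 := (posDef_iff_dotProduct_mulVec.mp hX).2 h
    have h2 : 0 ≤ a ⬝ᵥ X *ᵥ a := (posSemidef_iff_dotProduct_mulVec.mp hX.posSemidef).2 a
    simp only [star_trivial] at h1 h2
    linarith


lemma lyap_implies_schur {M X : Matrix (Fin n) (Fin n) ℝ} (hX : X.PosDef) (hs : X.IsSymm)
    (hY : (X - Mᵀ * X * M).PosDef) {μ : ℂ}
    (hμ : μ ∈ spectrum ℂ (M.map Complex.ofReal)) : ‖μ‖ < 1 := by
  obtain ⟨v, hv, hAv⟩ := exists_eigen hμ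
  set A : Matrix (Fin n) (Fin n) ℂ := M.map Complex.ofReal with hA
  set Xc : Matrix (Fin n) (Fin n) ℂ := X.map Complex.ofReal with hXc
  have hAH : Aᴴ = Aᵀ := by
    ext i j
    simp [hA, conjTranspose_apply, Matrix.map_apply, Complex.conj_ofReal]
  -- quadratic form value
  set c : ℂ := star v ⬝ᵥ Xc *ᵥ v with hc
  have hc_pos : 0 < c.re := re_quad_pos hX hv
  -- value on Y
  have hYmap : (X - Mᵀ * X * M).map Complex.ofReal = Xc - Aᵀ * Xc * A := by
    rw [Matrix.map_sub _ (fun a b => Complex.ofReal_sub a b)]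
    congr 1
    rw [map_mul_ofReal, map_mul_ofReal, map_transpose_ofReal]
  have key : (star v ⬝ᵥ (Aᵀ * Xc * A) *ᵥ v) = (Complex.normSq μ : ℂ) * c := by
    have h1 : (Aᵀ * Xc * A) *ᵥ v = Aᵀ *ᵥ (Xc *ᵥ (A *ᵥ v)) := by
      rw [← Matrix.mulVec_mulVec, ← Matrix.mulVec_mulVec]
    rw [h1, Matrix.dotProduct_mulVec, ← hAH, ← Matrix.star_mulVec, hAv]
    rw [Matrix.mulVec_smul, star_smul, smul_dotProduct, dotProduct_smul]
    rw [smul_smul, smul_eq_mul, ← hc]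
    congr 1
    rw [RCLike.star_def, mul_comm, Complex.mul_conj]
  have hq := re_quad_pos hY (v := v) hv
  rw [hYmap] at hq
  have hsub : star v ⬝ᵥ (Xc - Aᵀ * Xc * A) *ᵥ v = c - (Complex.normSq μ : ℂ) * c := by
    rw [Matrix.sub_mulVec, dotProduct_sub, key, hc]
  rw [hsub] at hq
  have : 0 < c.re - Complex.normSq μ * c.re := by
    simpa [Complex.sub_re, Complex.re_ofReal_mul] using hq
  have hns : Complex.normSq μ < 1 := by nlinarith
  have habs := Complex.sq_norm μ
  nlinarith [norm_nonneg μ]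



attribute [local instance] Matrix.linftyOpNormedRing Matrix.linftyOpNormedAlgebra

lemma entry_le_nnnorm {n : ℕ} (A : Matrix (Fin n) (Fin n) ℂ) (i j : Fin n) :
    ‖A i j‖₊ ≤ ‖A‖₊ := by
  rw [Matrix.linfty_opNNNorm_def]
  calc ‖A i j‖₊ ≤ ∑ j', ‖A i j'‖₊ :=
        Finset.single_le_sum (f := fun j' => ‖A i j'‖₊) (fun _ _ => zero_le) (Finset.mem_univ j)
    _ ≤ _ := Finset.le_sup (f := fun i => ∑ j', ‖A i j'‖₊) (Finset.mem_univ i)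

lemma geom_bound {n : ℕ} (hn : 0 < n) (M : Matrix (Fin n) (Fin n) ℝ)
    (h : ∀ μ ∈ spectrum ℂ (M.map Complex.ofReal), ‖μ‖ < 1) :
    ∃ r : ℝ, 0 ≤ r ∧ r < 1 ∧ ∀ᶠ k in atTop, ∀ i j, |(M ^ k) i j| ≤ r ^ k := by
  haveI : Nonempty (Fin n) := ⟨⟨0, hn⟩⟩
  set A : Matrix (Fin n) (Fin n) ℂ := M.map Complex.ofReal with hA
  have hρ : spectralRadius ℂ A < 1 := by
    have := spectrum.spectralRadius_lt_of_forall_lt_of_nonempty (spectrum.nonempty A)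
      (r := 1) (fun k hk => by
        have := h k hk
        exact_mod_cast this)
    simpa using this
  obtain ⟨r, hρr, hr1⟩ := ENNReal.lt_iff_exists_nnreal_btwn.mp hρ
  have hr1' : r < 1 := by exact_mod_cast hr1
  have h3 : ∀ᶠ (k : ℕ) in atTop, (‖A ^ k‖₊ : ℝ≥0∞) ^ (1 / (k : ℝ)) < r :=
    (spectrum.pow_nnnorm_pow_one_div_tendsto_nhds_spectralRadius A).eventually_lt_const hρr
  refine ⟨r, r.coe_nonneg, hr1', ?_⟩
  filter_upwards [h3, eventually_ge_atTop 1] with k hk hk1 i j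
  have hknz : (k : ℝ) ≠ 0 := by positivity
  have hnorm : ‖A ^ k‖₊ ≤ r ^ k := by
    have heq : (‖A ^ k‖₊ : ℝ≥0∞) = ((‖A ^ k‖₊ : ℝ≥0∞) ^ (1 / (k : ℝ))) ^ (k : ℕ) := by
      rw [← ENNReal.rpow_natCast _ k, ← ENNReal.rpow_mul, one_div, inv_mul_cancel₀ hknz,
        ENNReal.rpow_one]
    have : (‖A ^ k‖₊ : ℝ≥0∞) ≤ (r : ℝ≥0∞) ^ k := by
      rw [heq]
      exact pow_le_pow_left₀ zero_le hk.le k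
    rw [← ENNReal.coe_pow] at this
    exact_mod_cast this
  have hentry : ‖(A ^ k) i j‖ ≤ (r : ℝ) ^ k := by
    have := entry_le_nnnorm (A ^ k) i j
    calc ‖(A ^ k) i j‖ ≤ ‖A ^ k‖ := this
      _ ≤ (r : ℝ) ^ k := by exact_mod_cast hnorm
  have hmp : (M ^ k).map Complex.ofReal = A ^ k := by
    clear hk hk1 hknz hnorm hentry
    induction k with
    | zero => simp [Matrix.map_one]
    | succ k ih => rw [pow_succ, pow_succ, ← ih]; exact Matrix.map_mul (f := Complex.ofRealHom)
  have hAAk : (A ^ k) i j = ((M ^ k) i j : ℂ) := by rw [← hmp]; rfl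
  rw [hAAk] at hentry
  simpa [Complex.norm_real] using hentry

lemma schur_exists_lyap {n : ℕ} (M : Matrix (Fin n) (Fin n) ℝ)
    (hgeom : ∃ r : ℝ, 0 ≤ r ∧ r < 1 ∧ ∀ᶠ k in atTop, ∀ i j, |(M ^ k) i j| ≤ r ^ k) :
    ∃ X : Matrix (Fin n) (Fin n) ℝ,
      X.PosDef ∧ X.IsSymm ∧ (X - Mᵀ * X * M).PosDef := by
  obtain ⟨r, hr0, hr1, hev⟩ := hgeom
  set g : ℕ → Matrix (Fin n) (Fin n) ℝ := fun k => (M ^ k)ᵀ * (M ^ k) with hgdef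
  -- summability
  have hmaj : Summable (fun k : ℕ => (n : ℝ) * (r ^ 2) ^ k) :=
    (summable_geometric_of_lt_one (by positivity) (by nlinarith)).mul_left _
  have hentry : ∀ i j, Summable (fun k => g k i j) := by
    intro i j
    refine Summable.of_norm_bounded_eventually_nat hmaj ?_
    filter_upwards [hev] with k hk
    have : g k i j = ∑ p, (M ^ k) p i * (M ^ k) p j := by
      simp only [hgdef, Matrix.mul_apply, Matrix.transpose_apply]
    rw [Real.norm_eq_abs, this]
    calc |∑ p, (M ^ k) p i * (M ^ k) p j| ≤ ∑ p, |(M ^ k) p i * (M ^ k) p j| :=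
          Finset.abs_sum_le_sum_abs _ _
      _ ≤ ∑ _p : Fin n, r ^ k * r ^ k := by
          refine Finset.sum_le_sum fun p _ => ?_
          rw [abs_mul]
          exact mul_le_mul (hk p i) (hk p j) (abs_nonneg _) (by positivity)
      _ = (n : ℝ) * (r ^ 2) ^ k := by
          simp [Finset.sum_const, ← pow_mul, mul_comm]
          ring
  have hg : Summable g := by
    refine Pi.summable.mpr ?_
    intro i
    refine Pi.summable.mpr ?_
    intro j
    exact hentry i j
  set X : Matrix (Fin n) (Fin n) ℝ := ∑' k, g k with hX
  have hg0 : g 0 = 1 := by simp [hgdef]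
  -- shift identity
  have hshift : Mᵀ * X * M = X - 1 := by
    have h1 : ∀ k, Mᵀ * g k * M = g (k + 1) := by
      intro k
      simp only [hgdef, pow_succ, Matrix.transpose_mul]
      noncomm_ring
    have h2 : Mᵀ * X * M = ∑' k, Mᵀ * g k * M := by
      rw [hX, ← Summable.tsum_mul_left Mᵀ hg, ← Summable.tsum_mul_right _ (hg.mul_left Mᵀ)]
    have h3 : (∑' k, g (k + 1)) = X - g 0 := by
      have := Summable.tsum_eq_zero_add hg
      rw [hX]
      rw [this]
      abel
    rw [h2]
    simp_rw [h1]
    rw [h3, hg0]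
  -- symmetry
  have hsymm : X.IsSymm := by
    rw [Matrix.IsSymm, hX, Matrix.transpose_tsum]
    refine tsum_congr fun k => ?_
    simp [hgdef, Matrix.transpose_mul]
  -- quadratic form
  have hquad : ∀ x : Fin n → ℝ, x ≠ 0 → 0 < x ⬝ᵥ X *ᵥ x := by
    intro x hx
    let φ : Matrix (Fin n) (Fin n) ℝ →+ ℝ :=
      { toFun := fun B => x ⬝ᵥ B *ᵥ x
        map_zero' := by simp
        map_add' := fun B C => by simp [Matrix.add_mulVec, dotProduct_add] }
    have hφc : Continuous φ := by
      show Continuous fun B : Matrix (Fin n) (Fin n) ℝ => x ⬝ᵥ B *ᵥ x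
      exact Continuous.dotProduct continuous_const
        (Continuous.matrix_mulVec continuous_id continuous_const)
    have hφ : HasSum (fun k => φ (g k)) (φ X) := hg.hasSum.map φ hφc
    have hterm : ∀ k, φ (g k) = (M ^ k *ᵥ x) ⬝ᵥ (M ^ k *ᵥ x) := by
      intro k
      show x ⬝ᵥ ((M ^ k)ᵀ * (M ^ k)) *ᵥ x = _
      rw [← Matrix.mulVec_mulVec, Matrix.dotProduct_mulVec, Matrix.vecMul_transpose]
    have hnonneg : ∀ k, 0 ≤ φ (g k) := by
      intro k
      rw [hterm k]
      exact Finset.sum_nonneg fun p _ => mul_self_nonneg _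
    have h0le : φ (g 0) ≤ φ X := le_hasSum hφ 0 fun k _ => hnonneg k
    have h0pos : 0 < φ (g 0) := by
      rw [hg0]
      show 0 < x ⬝ᵥ (1 : Matrix (Fin n) (Fin n) ℝ) *ᵥ x
      rw [Matrix.one_mulVec]
      obtain ⟨i, hi⟩ := Function.ne_iff.mp hx
      refine Finset.sum_pos' (fun p _ => mul_self_nonneg _) ⟨i, Finset.mem_univ i, ?_⟩
      exact mul_self_pos.mpr hi
    exact lt_of_lt_of_le h0pos h0le
  have hherm : X.IsHermitian := by
    rw [Matrix.IsHermitian]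
    ext i j
    have := congrFun (congrFun hsymm i) j
    simpa [Matrix.conjTranspose_apply, Matrix.transpose_apply] using this
  refine ⟨X, posDef_iff_dotProduct_mulVec.mpr ⟨hherm, fun x hx => by simpa using hquad x hx⟩, hsymm, ?_⟩
  rw [hshift]
  simpa using Matrix.PosDef.one (n := Fin n) (R := ℝ)

end SchurAux

open SchurAux

/-- `M` is Schur stable iff there is a symmetric positive definite `X` with
`MᵀXM - X` negative definite (equivalently `X - MᵀXM` positive definite). -/
theorem isSchur_iff_exists_lyapunov {n : ℕ} (M : Matrix (Fin n) (Fin n) ℝ) :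
    IsSchur M ↔ ∃ X : Matrix (Fin n) (Fin n) ℝ,
      X.PosDef ∧ X.IsSymm ∧ (X - Mᵀ * X * M).PosDef := by
  constructor
  · intro h
    rcases Nat.eq_zero_or_pos n with hn | hn
    · subst hn
      refine ⟨1, Matrix.PosDef.one, Matrix.isSymm_one, ?_⟩
      have : (1 : Matrix (Fin 0) (Fin 0) ℝ) - Mᵀ * 1 * M = 1 := by
        ext i j
        exact absurd i.2 (Nat.not_lt_zero _)
      rw [this]
      exact Matrix.PosDef.one
    · exact schur_exists_lyap M (geom_bound hn M h)
  · rintro ⟨X, hX, hs, hY⟩ μ hμ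
    exact lyap_implies_schur hX hs hY hμ
end

section
/- If A is Schur stable, then for any symmetric matrix Q ∈ ℝ^{n×n}, the Lyapunov equation AᵀXA + Q = X has a unique symmetric solution, given by X = Σ_{j=0}^∞ (Aᵀ)^j Q A^j, and this series converges. -/
open Matrix

section AuxNorm

open Filter
open scoped NNReal ENNReal Topology

attribute [local instance] Matrix.linftyOpNormedAddCommGroup Matrix.linftyOpNormedRing
  Matrix.linftyOpNormedAlgebra

lemma entry_nnnorm_le' {α : Type*} [NormedAddCommGroup α] {a b : ℕ}
    (M : Matrix (Fin a) (Fin b) α) (i : Fin a) (k : Fin b) : ‖M i k‖₊ ≤ ‖M‖₊ := by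
  rw [Matrix.linfty_opNNNorm_def]
  exact le_trans
    (Finset.single_le_sum (f := fun j => ‖M i j‖₊) (fun j _ => zero_le) (Finset.mem_univ k))
    (Finset.le_sup (f := fun i => ∑ j, ‖M i j‖₊) (Finset.mem_univ i))

lemma nnnorm_map_ofReal {a b : ℕ} (M : Matrix (Fin a) (Fin b) ℝ) :
    ‖M.map Complex.ofReal‖₊ = ‖M‖₊ := by
  simp [Matrix.linfty_opNNNorm_def, Matrix.map_apply]

lemma nnnorm_transpose_le {a : ℕ} (M : Matrix (Fin a) (Fin a) ℝ) :
    ‖Mᵀ‖₊ ≤ (a : ℝ≥0) * ‖M‖₊ := by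
  rw [Matrix.linfty_opNNNorm_def]
  refine Finset.sup_le fun k _ => ?_
  calc ∑ i, ‖Mᵀ k i‖₊ ≤ ∑ _i : Fin a, ‖M‖₊ :=
        Finset.sum_le_sum fun i _ => entry_nnnorm_le' M i k
    _ = (a : ℝ≥0) * ‖M‖₊ := by simp [Finset.sum_const, Finset.card_univ, nsmul_eq_mul]

lemma schur_pow_decay {N : ℕ} (A : Matrix (Fin N) (Fin N) ℝ) (hN : 0 < N) (hA : IsSchur A) :
    ∃ r : ℝ≥0, 0 < r ∧ r < 1 ∧ ∃ m : ℕ, ∀ j, m ≤ j → ‖A ^ j‖₊ ≤ r ^ j := by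
  haveI : Nonempty (Fin N) := Fin.pos_iff_nonempty.mp hN
  set B : Matrix (Fin N) (Fin N) ℂ := Complex.ofRealHom.mapMatrix A with hB
  haveI : CompleteSpace (Matrix (Fin N) (Fin N) ℂ) :=
    (by infer_instance)
  haveI : Nontrivial (Matrix (Fin N) (Fin N) ℂ) :=
    (by infer_instance : Nontrivial (Fin N → Fin N → ℂ))
  have hrad : spectralRadius ℂ B < 1 := by
    have := spectrum.spectralRadius_lt_of_forall_lt B (r := 1) ?_
    · simpa using this
    · intro z hz
      have : ‖z‖ < 1 := hA z hz
      rw [← NNReal.coe_lt_coe]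
      simpa [coe_nnnorm] using this
  obtain ⟨r, hr1, hr2⟩ := ENNReal.lt_iff_exists_nnreal_btwn.mp hrad
  have hr3 : r < 1 := by exact_mod_cast hr2
  have hgel := spectrum.pow_nnnorm_pow_one_div_tendsto_nhds_spectralRadius B
  have hev : ∀ᶠ j : ℕ in atTop, (‖B ^ j‖₊ : ℝ≥0∞) ^ (1 / (j : ℝ)) < (r : ℝ≥0∞) :=
    hgel.eventually_lt_const hr1
  rw [Filter.eventually_atTop] at hev
  obtain ⟨m, hm⟩ := hev
  have h12 : (1/2 : ℝ≥0) < 1 := by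
    rw [← NNReal.coe_lt_coe]; norm_num
  refine ⟨max r (1/2), by positivity, max_lt hr3 h12, max m 1, fun j hj => ?_⟩
  have hj1 : 1 ≤ j := le_trans (le_max_right m 1) hj
  have hjm : m ≤ j := le_trans (le_max_left m 1) hj
  have h := hm j hjm
  have hj0 : (j : ℝ) ≠ 0 := by positivity
  have hBj : (‖B ^ j‖₊ : ℝ≥0∞) < (r : ℝ≥0∞) ^ (j : ℕ) := by
    have := ENNReal.rpow_lt_rpow h (by positivity : (0:ℝ) < (j : ℝ))
    rwa [← ENNReal.rpow_mul, one_div, inv_mul_cancel₀ hj0, ENNReal.rpow_one,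
      ENNReal.rpow_natCast] at this
  have hAB : ‖A ^ j‖₊ = ‖B ^ j‖₊ := by
    rw [hB, ← map_pow, RingHom.mapMatrix_apply]
    exact (nnnorm_map_ofReal (A ^ j)).symm
  have : ‖A ^ j‖₊ ≤ r ^ j := by
    rw [hAB]
    exact_mod_cast hBj.le
  exact this.trans (pow_le_pow_left₀ zero_le (le_max_left _ _) j)

/-- Key entrywise bound. -/
lemma schur_entry_bound {N : ℕ} (A : Matrix (Fin N) (Fin N) ℝ) (hN : 0 < N) (hA : IsSchur A)
    (M : Matrix (Fin N) (Fin N) ℝ) :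
    ∃ C s : ℝ, 0 < s ∧ s < 1 ∧ ∀ (j : ℕ) (i k : Fin N),
      |(Aᵀ ^ j * M * A ^ j) i k| ≤ C * s ^ j := by
  obtain ⟨r, hr0, hr1, m, hm⟩ := schur_pow_decay A hN hA
  set s : ℝ := (r : ℝ) ^ 2 with hs
  have hs0 : 0 < s := by positivity
  have hs1 : s < 1 := by
    have : (r : ℝ) < 1 := hr1
    nlinarith [r.coe_nonneg]
  set C : ℝ := (∑ j ∈ Finset.range m, ‖Aᵀ ^ j * M * A ^ j‖ / s ^ j) + (N * ‖M‖ + 1) with hC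
  refine ⟨C, s, hs0, hs1, fun j i k => ?_⟩
  have hnorm : |(Aᵀ ^ j * M * A ^ j) i k| ≤ ‖Aᵀ ^ j * M * A ^ j‖ := by
    have := entry_nnnorm_le' (Aᵀ ^ j * M * A ^ j) i k
    simpa [← NNReal.coe_le_coe, coe_nnnorm, Real.norm_eq_abs] using this
  have hsum_nonneg : (0:ℝ) ≤ ∑ j ∈ Finset.range m, ‖Aᵀ ^ j * M * A ^ j‖ / s ^ j :=
    Finset.sum_nonneg fun j _ => by positivity
  rcases lt_or_ge j m with hjm | hjm
  · -- small j
    have hterm : ‖Aᵀ ^ j * M * A ^ j‖ / s ^ j ≤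
        ∑ j ∈ Finset.range m, ‖Aᵀ ^ j * M * A ^ j‖ / s ^ j :=
      Finset.single_le_sum (f := fun j => ‖Aᵀ ^ j * M * A ^ j‖ / s ^ j)
        (fun j _ => by positivity) (Finset.mem_range.mpr hjm)
    have hCterm : ‖Aᵀ ^ j * M * A ^ j‖ / s ^ j ≤ C := by
      rw [hC]
      have hM : (0:ℝ) ≤ N * ‖M‖ + 1 := by positivity
      linarith
    calc |(Aᵀ ^ j * M * A ^ j) i k| ≤ ‖Aᵀ ^ j * M * A ^ j‖ := hnorm
      _ = (‖Aᵀ ^ j * M * A ^ j‖ / s ^ j) * s ^ j := by field_simp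
      _ ≤ C * s ^ j := by
          apply mul_le_mul_of_nonneg_right hCterm (by positivity)
  · -- large j
    have hAj : ‖A ^ j‖₊ ≤ r ^ j := hm j hjm
    have hAtj : ‖Aᵀ ^ j‖₊ ≤ (N : ℝ≥0) * r ^ j := by
      rw [← Matrix.transpose_pow]
      exact (nnnorm_transpose_le _).trans (mul_le_mul_right hAj _)
    have hnn : ‖Aᵀ ^ j * M * A ^ j‖₊ ≤ ((N : ℝ≥0) * r ^ j) * ‖M‖₊ * r ^ j := by
      calc ‖Aᵀ ^ j * M * A ^ j‖₊ ≤ ‖Aᵀ ^ j * M‖₊ * ‖A ^ j‖₊ :=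
            Matrix.linfty_opNNNorm_mul _ _
        _ ≤ ‖Aᵀ ^ j‖₊ * ‖M‖₊ * ‖A ^ j‖₊ :=
            mul_le_mul_left (Matrix.linfty_opNNNorm_mul _ _) _
        _ ≤ ((N : ℝ≥0) * r ^ j) * ‖M‖₊ * r ^ j := by
            exact mul_le_mul' (mul_le_mul' hAtj le_rfl) hAj
    have hre : ‖Aᵀ ^ j * M * A ^ j‖ ≤ (N * ‖M‖) * s ^ j := by
      have := NNReal.coe_le_coe.mpr hnn
      push_cast at this
      calc ‖Aᵀ ^ j * M * A ^ j‖ ≤ ((N : ℝ) * (r:ℝ) ^ j) * ‖M‖ * (r:ℝ) ^ j := this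
        _ = (N * ‖M‖) * s ^ j := by
            have hsj : s ^ j = (r:ℝ) ^ j * (r:ℝ) ^ j := by
              rw [hs, ← pow_mul, two_mul, pow_add]
            rw [hsj]; ring
    calc |(Aᵀ ^ j * M * A ^ j) i k| ≤ (N * ‖M‖) * s ^ j := hnorm.trans hre
      _ ≤ C * s ^ j := by
          apply mul_le_mul_of_nonneg_right _ (by positivity)
          rw [hC]; linarith
end AuxNorm


open Filter Topology in
/-- For Schur stable `A` and symmetric `Q`, the Lyapunov equation `AᵀXA + Q = X`
has the unique symmetric solution `X = ∑ (Aᵀ)ʲ Q Aʲ`, and the series converges. -/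
theorem lyapunov_unique_solution {n : ℕ} (A Q : Matrix (Fin n) (Fin n) ℝ)
    (hA : IsSchur A) (hQ : Q.IsSymm) :
    Summable (fun j : ℕ => Aᵀ ^ j * Q * A ^ j) ∧
    (∑' j : ℕ, Aᵀ ^ j * Q * A ^ j).IsSymm ∧
    Aᵀ * (∑' j : ℕ, Aᵀ ^ j * Q * A ^ j) * A + Q = ∑' j : ℕ, Aᵀ ^ j * Q * A ^ j ∧
    ∀ X : Matrix (Fin n) (Fin n) ℝ, X.IsSymm → Aᵀ * X * A + Q = X →
      X = ∑' j : ℕ, Aᵀ ^ j * Q * A ^ j := by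
  rcases Nat.eq_zero_or_pos n with hn | hn
  · subst hn
    haveI : Subsingleton (Matrix (Fin 0) (Fin 0) ℝ) :=
      inferInstanceAs (Subsingleton (Fin 0 → Fin 0 → ℝ))
    refine ⟨?_, Subsingleton.elim _ _, Subsingleton.elim _ _, fun X _ _ => Subsingleton.elim _ _⟩
    have h0 : (fun j : ℕ => Aᵀ ^ j * Q * A ^ j) = fun _ => (0 : Matrix (Fin 0) (Fin 0) ℝ) :=
      funext fun j => Subsingleton.elim _ _
    rw [h0]; exact summable_zero
  · set f : ℕ → Matrix (Fin n) (Fin n) ℝ := fun j => Aᵀ ^ j * Q * A ^ j with hf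
    obtain ⟨C, s, hs0, hs1, hbound⟩ := schur_entry_bound A hn hA Q
    have hgeom : Summable (fun j : ℕ => C * s ^ j) :=
      (summable_geometric_of_lt_one hs0.le hs1).mul_left C
    have hentry : ∀ i k : Fin n, Summable fun j => f j i k := fun i k =>
      hgeom.of_norm_bounded (fun j => by
        simpa [Real.norm_eq_abs] using hbound j i k)
    have hsummable : Summable f := Pi.summable.mpr fun i => Pi.summable.mpr fun k => hentry i k
    have hS := hsummable.hasSum
    set S : Matrix (Fin n) (Fin n) ℝ := ∑' j, f j with hSdef
    have hfsymm : ∀ j, (f j)ᵀ = f j := fun j => by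
      show (Aᵀ ^ j * Q * A ^ j)ᵀ = Aᵀ ^ j * Q * A ^ j
      rw [Matrix.transpose_mul, Matrix.transpose_mul, Matrix.transpose_pow,
        Matrix.transpose_pow, Matrix.transpose_transpose, hQ.eq, mul_assoc]
    have hSsymm : S.IsSymm := by
      apply Matrix.ext
      intro i k
      rw [Matrix.transpose_apply]
      erw [hSdef, tsum_apply hsummable, tsum_apply hsummable,
        tsum_apply (Pi.summable.mp hsummable k), tsum_apply (Pi.summable.mp hsummable i)]
      exact tsum_congr fun j => congrFun (congrFun (hfsymm j) i) k
    -- the fixed point equation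
    have hg : Continuous fun X : Matrix (Fin n) (Fin n) ℝ => Aᵀ * X * A :=
      (continuous_const.matrix_mul continuous_id).matrix_mul continuous_const
    have hshift : ∀ j, Aᵀ * f j * A = f (j + 1) := fun j => by
      show Aᵀ * (Aᵀ ^ j * Q * A ^ j) * A = Aᵀ ^ (j + 1) * Q * A ^ (j + 1)
      rw [pow_succ A, pow_succ' Aᵀ]
      simp only [mul_assoc]
    have h3 : HasSum (fun j => f (j + 1)) (Aᵀ * S * A) := by
      have hmap := hS.map (AddMonoidHom.mk' (fun X : Matrix (Fin n) (Fin n) ℝ => Aᵀ * X * A)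
        (fun X Y => by simp [mul_add, add_mul])) hg
      have hmap' : HasSum (fun j => Aᵀ * f j * A) (Aᵀ * S * A) := hmap
      simp only [hshift] at hmap'
      exact hmap'
    have heq : Aᵀ * S * A + Q = S := by
      have h0 : f 0 = Q := by
        show Aᵀ ^ 0 * Q * A ^ 0 = Q
        simp
      have hz := Summable.tsum_eq_zero_add hsummable
      rw [h0, h3.tsum_eq, ← hSdef] at hz
      rw [add_comm]
      exact hz.symm
    refine ⟨hsummable, hSsymm, heq, ?_⟩
    intro X hX hXeq
    have claim : ∀ k, X = (∑ j ∈ Finset.range k, f j) + Aᵀ ^ k * X * A ^ k := by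
      intro k
      induction k with
      | zero => simp
      | succ k ih =>
        have htail : Aᵀ ^ k * X * A ^ k = f k + Aᵀ ^ (k + 1) * X * A ^ (k + 1) := by
          conv_lhs => rw [← hXeq]
          show Aᵀ ^ k * (Aᵀ * X * A + Q) * A ^ k
            = Aᵀ ^ k * Q * A ^ k + Aᵀ ^ (k + 1) * X * A ^ (k + 1)
          rw [mul_add, add_mul, add_comm]
          simp only [mul_assoc, ← pow_succ, ← pow_succ']
          rw [← mul_assoc (Aᵀ ^ k) Aᵀ, ← pow_succ]
        calc X = (∑ j ∈ Finset.range k, f j) + Aᵀ ^ k * X * A ^ k := ih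
          _ = (∑ j ∈ Finset.range k, f j) + (f k + Aᵀ ^ (k + 1) * X * A ^ (k + 1)) := by
              rw [htail]
          _ = ((∑ j ∈ Finset.range k, f j) + f k) + Aᵀ ^ (k + 1) * X * A ^ (k + 1) := by
              rw [add_assoc]
          _ = (∑ j ∈ Finset.range (k + 1), f j) + Aᵀ ^ (k + 1) * X * A ^ (k + 1) := by
              rw [Finset.sum_range_succ]
    have htail0 : Tendsto (fun k => Aᵀ ^ k * X * A ^ k) atTop (𝓝 0) := by
      obtain ⟨C', s', hs'0, hs'1, hb'⟩ := schur_entry_bound A hn hA X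
      have hgeo : Tendsto (fun j : ℕ => C' * s' ^ j) atTop (𝓝 0) := by
        simpa using (tendsto_pow_atTop_nhds_zero_of_lt_one hs'0.le hs'1).const_mul C'
      refine tendsto_pi_nhds.mpr fun i => ?_
      refine tendsto_pi_nhds.mpr fun k => ?_
      refine squeeze_zero_norm (fun j => ?_) hgeo
      simpa [Real.norm_eq_abs] using hb' j i k
    have hlim : Tendsto (fun k => (∑ j ∈ Finset.range k, f j) + Aᵀ ^ k * X * A ^ k)
        atTop (𝓝 (S + 0)) := hS.tendsto_sum_nat.add htail0
    rw [add_zero] at hlim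
    have hconst : Tendsto (fun _ : ℕ => X) atTop (𝓝 X) := tendsto_const_nhds
    exact tendsto_nhds_unique (hconst.congr claim) hlim
end

section
/- If A is Schur stable and Q is positive semidefinite, then the unique solution X of the Lyapunov equation AᵀXA + Q = X is positive semidefinite; if moreover Q is positive definite, then X is positive definite. -/
open Matrix

open Filter Topology Finset

open scoped ENNReal NNReal

lemma aux_norm_pow_tendsto {E : Type*} [NormedAddCommGroup E]
    [NormedSpace ℂ E] [CompleteSpace E] (T : E →L[ℂ] E)
    (h : spectralRadius ℂ T < 1) :
    Tendsto (fun k : ℕ => ‖T ^ k‖) atTop (𝓝 0) := by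
  obtain ⟨r, hr1, hr2⟩ := exists_between h
  have hrtop : r ≠ ⊤ := (hr2.trans_le le_top).ne
  lift r to ℝ≥0 using hrtop
  have hr2' : (r : ℝ) < 1 := by exact_mod_cast hr2
  have hg := spectrum.pow_nnnorm_pow_one_div_tendsto_nhds_spectralRadius T
  have hev : ∀ᶠ k : ℕ in atTop, (‖T ^ k‖₊ : ℝ≥0∞) ^ (1 / (k : ℝ)) < (r : ℝ≥0∞) :=
    hg.eventually_lt_const hr1
  have hev2 : ∀ᶠ k : ℕ in atTop, ‖T ^ k‖ ≤ (r : ℝ) ^ k := by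
    filter_upwards [hev, eventually_ge_atTop 1] with k hk hk1
    have hkne : (k : ℝ) ≠ 0 := by positivity
    have h3 := ENNReal.rpow_lt_rpow hk (by positivity : (0:ℝ) < (k : ℝ))
    rw [← ENNReal.rpow_mul, one_div, inv_mul_cancel₀ hkne, ENNReal.rpow_one,
      ENNReal.rpow_natCast, ← ENNReal.coe_pow, ENNReal.coe_lt_coe] at h3
    have : ‖T ^ k‖₊ ≤ r ^ k := h3.le
    exact_mod_cast this
  have hpow : Tendsto (fun k : ℕ => (r : ℝ) ^ k) atTop (𝓝 0) :=
    tendsto_pow_atTop_nhds_zero_of_lt_one r.coe_nonneg hr2'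
  exact squeeze_zero' (Eventually.of_forall fun k => norm_nonneg _) hev2 hpow

lemma euclidean_coord_le_norm {n : ℕ} (w : EuclideanSpace ℂ (Fin n)) (i : Fin n) :
    ‖w i‖ ≤ ‖w‖ := by
  rw [EuclideanSpace.norm_eq]
  rw [show ‖w i‖ = Real.sqrt (‖w i‖ ^ 2) by rw [Real.sqrt_sq (norm_nonneg _)]]
  exact Real.sqrt_le_sqrt (Finset.single_le_sum
    (f := fun j => ‖w j‖ ^ 2) (fun j _ => sq_nonneg _) (Finset.mem_univ i))

lemma schur_mulVec_tendsto {n : ℕ} {A : Matrix (Fin n) (Fin n) ℝ} (hA : IsSchur A)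
    (x : Fin n → ℝ) :
    Tendsto (fun k : ℕ => (A ^ k) *ᵥ x) atTop (𝓝 0) := by
  classical
  set B : Matrix (Fin n) (Fin n) ℂ := A.map Complex.ofReal with hB
  have hmap : ∀ k : ℕ, B ^ k = (A ^ k).map (Complex.ofRealHom : ℝ →+* ℂ) := by
    intro k
    rw [hB]
    induction k with
    | zero => simp [Matrix.map_one]
    | succ m ih =>
        rw [pow_succ, pow_succ, ih, Matrix.map_mul]
        rfl
  set T := Matrix.toEuclideanCLM (𝕜 := ℂ) B with hT
  have hspec : spectrum ℂ T = spectrum ℂ B :=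
    AlgEquiv.spectrum_eq (Matrix.toEuclideanCLM (𝕜 := ℂ) (n := Fin n)) B
  have hrad : spectralRadius ℂ T < 1 := by
    rcases Set.eq_empty_or_nonempty (spectrum ℂ T) with he | hne
    · rw [spectralRadius]
      simp [he]
    · refine spectrum.spectralRadius_lt_of_forall_lt_of_nonempty hne (r := 1) fun μ hμ => ?_
      have hμ' := hA μ (hspec ▸ hμ)
      rw [← NNReal.coe_lt_coe]
      simpa using hμ'
  have hTnorm := aux_norm_pow_tendsto T hrad
  rw [tendsto_pi_nhds]
  intro i
  set z : Fin n → ℂ := fun j => (x j : ℂ) with hz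
  set v : EuclideanSpace ℂ (Fin n) := (WithLp.equiv 2 (Fin n → ℂ)).symm z with hv
  have key : ∀ k : ℕ, |((A ^ k) *ᵥ x) i| ≤ ‖T ^ k‖ * ‖v‖ := by
    intro k
    have h1 : (T ^ k) v = (WithLp.equiv 2 (Fin n → ℂ)).symm ((B ^ k) *ᵥ z) := by
      rw [hT, ← map_pow]
      simpa [hv, Matrix.toLin'_apply] using Matrix.toEuclideanCLM_toLp (B ^ k) z
    have hBk : (B ^ k) *ᵥ z = fun j => ((((A ^ k) *ᵥ x) j : ℝ) : ℂ) := by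
      funext j
      rw [hmap k]
      exact (RingHom.map_mulVec Complex.ofRealHom (A ^ k) x j).symm
    have h2 : ‖(((B ^ k) *ᵥ z) i : ℂ)‖ ≤ ‖(T ^ k) v‖ := by
      rw [h1]
      exact euclidean_coord_le_norm ((WithLp.equiv 2 (Fin n → ℂ)).symm (B ^ k *ᵥ z)) i
    have h3 : ‖(T ^ k) v‖ ≤ ‖T ^ k‖ * ‖v‖ := (T ^ k).le_opNorm v
    have h4 : ‖(((B ^ k) *ᵥ z) i : ℂ)‖ = |((A ^ k) *ᵥ x) i| := by
      rw [hBk]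
      simp [Complex.norm_real]
    rw [← h4]
    exact h2.trans h3
  have hlim : Tendsto (fun k : ℕ => ‖T ^ k‖ * ‖v‖) atTop (𝓝 0) := by
    have := hTnorm.mul_const ‖v‖
    rwa [zero_mul] at this
  have habs : Tendsto (fun k : ℕ => |((A ^ k) *ᵥ x) i|) atTop (𝓝 0) :=
    squeeze_zero' (Eventually.of_forall fun k => abs_nonneg _)
      (Eventually.of_forall key) hlim
  simpa using tendsto_zero_iff_abs_tendsto_zero _ |>.mpr habs

/-- If `A` is Schur stable and `Q ⪰ 0`, any solution `X` of `AᵀXA + Q = X` is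
positive semidefinite; if moreover `Q ≻ 0` then `X ≻ 0`. -/
theorem lyapunov_solution_posSemidef {n : ℕ} (A Q X : Matrix (Fin n) (Fin n) ℝ)
    (hA : IsSchur A) (hQ : Q.PosSemidef) (hX : Aᵀ * X * A + Q = X) :
    X.PosSemidef ∧ (Q.PosDef → X.PosDef) := by
  classical
  -- continuity of the bilinear form
  have hcont : ∀ M : Matrix (Fin n) (Fin n) ℝ,
      Continuous (fun p : (Fin n → ℝ) × (Fin n → ℝ) => p.1 ⬝ᵥ M *ᵥ p.2) :=
    fun M => (continuous_fst).dotProduct ((continuous_const).matrix_mulVec continuous_snd)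
  -- symmetry of X
  have hQsym : Qᵀ = Q := by
    funext i j
    have := congrFun (congrFun hQ.1 i) j
    simpa [Matrix.conjTranspose_apply] using this
  have htrans : Aᵀ * Xᵀ * A + Q = Xᵀ := by
    have := congrArg Matrix.transpose hX
    rw [Matrix.transpose_add, Matrix.transpose_mul, Matrix.transpose_mul,
      Matrix.transpose_transpose, hQsym] at this
    rw [← Matrix.mul_assoc] at this
    exact this
  set D : Matrix (Fin n) (Fin n) ℝ := X - Xᵀ with hD
  have hDstep : Aᵀ * D * A = D := by
    have h1 : Aᵀ * (X - Xᵀ) * A = (Aᵀ * X * A + Q) - (Aᵀ * Xᵀ * A + Q) := by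
      noncomm_ring
    rw [hX, htrans] at h1
    exact h1
  have hDN : ∀ N : ℕ, (A ^ N)ᵀ * D * (A ^ N) = D := by
    intro N
    induction N with
    | zero => simp
    | succ m ih =>
        calc (A ^ (m + 1))ᵀ * D * A ^ (m + 1)
            = Aᵀ * ((A ^ m)ᵀ * D * A ^ m) * A := by
              rw [pow_succ, Matrix.transpose_mul]
              noncomm_ring
          _ = D := by rw [ih, hDstep]
  have hXsym : Xᵀ = X := by
    have hDzero : D = 0 := by
      funext i j
      have hexpr : ∀ N : ℕ, D i j =
          ((A ^ N) *ᵥ Pi.single i 1) ⬝ᵥ D *ᵥ ((A ^ N) *ᵥ Pi.single j 1) := by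
        intro N
        have hsingle : ((A ^ N)ᵀ * D * A ^ N) i j =
            Pi.single i 1 ⬝ᵥ ((A ^ N)ᵀ * D * A ^ N) *ᵥ Pi.single j 1 := by
          simp [Matrix.mulVec_single, single_dotProduct]
        conv_lhs => rw [← hDN N]
        rw [hsingle, ← Matrix.mulVec_mulVec, ← Matrix.mulVec_mulVec, Matrix.dotProduct_mulVec,
          Matrix.vecMul_transpose]
      have hlim : Tendsto (fun N : ℕ =>
          ((A ^ N) *ᵥ Pi.single i 1) ⬝ᵥ D *ᵥ ((A ^ N) *ᵥ Pi.single j 1)) atTop (𝓝 0) := by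
        have h := ((hcont D).tendsto (0, 0)).comp
          (((schur_mulVec_tendsto hA (Pi.single i 1)).prodMk_nhds
            (schur_mulVec_tendsto hA (Pi.single j 1))))
        convert h using 2
        all_goals simp
      have hconst : Tendsto (fun _ : ℕ => D i j) atTop (𝓝 0) := by
        rw [funext hexpr]
        exact hlim
      exact tendsto_nhds_unique tendsto_const_nhds hconst
    have := sub_eq_zero.mp hDzero
    exact this.symm
  -- quadratic form step
  have hstep : ∀ y : Fin n → ℝ,
      y ⬝ᵥ X *ᵥ y = (A *ᵥ y) ⬝ᵥ X *ᵥ (A *ᵥ y) + y ⬝ᵥ Q *ᵥ y := by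
    intro y
    conv_lhs => rw [← hX]
    rw [Matrix.add_mulVec, dotProduct_add, ← Matrix.mulVec_mulVec, ← Matrix.mulVec_mulVec,
      Matrix.dotProduct_mulVec, Matrix.vecMul_transpose]
  have hsum : ∀ (y : Fin n → ℝ) (N : ℕ),
      y ⬝ᵥ X *ᵥ y = ((A ^ N) *ᵥ y) ⬝ᵥ X *ᵥ ((A ^ N) *ᵥ y) +
        ∑ k ∈ Finset.range N, ((A ^ k) *ᵥ y) ⬝ᵥ Q *ᵥ ((A ^ k) *ᵥ y) := by
    intro y N
    induction N with
    | zero => simp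
    | succ m ih =>
        rw [Finset.sum_range_succ, ih, hstep ((A ^ m) *ᵥ y)]
        rw [Matrix.mulVec_mulVec, ← pow_succ']
        ring
  have hQnn : ∀ y : Fin n → ℝ, 0 ≤ y ⬝ᵥ Q *ᵥ y := by
    intro y
    simpa using hQ.dotProduct_mulVec_nonneg y
  have hmain : ∀ y : Fin n → ℝ, y ⬝ᵥ Q *ᵥ y ≤ y ⬝ᵥ X *ᵥ y := by
    intro y
    have hSlim : Tendsto (fun N : ℕ => ((A ^ N) *ᵥ y) ⬝ᵥ X *ᵥ ((A ^ N) *ᵥ y)) atTop (𝓝 0) := by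
      have h := ((hcont X).tendsto (0, 0)).comp
        ((schur_mulVec_tendsto hA y).prodMk_nhds (schur_mulVec_tendsto hA y))
      convert h using 2
      all_goals simp
    have hub : ∀ᶠ N : ℕ in atTop,
        ((A ^ N) *ᵥ y) ⬝ᵥ X *ᵥ ((A ^ N) *ᵥ y) ≤ y ⬝ᵥ X *ᵥ y - y ⬝ᵥ Q *ᵥ y := by
      filter_upwards [eventually_ge_atTop 1] with N hN
      have h1 := hsum y N
      have h2 : y ⬝ᵥ Q *ᵥ y ≤ ∑ k ∈ Finset.range N, ((A ^ k) *ᵥ y) ⬝ᵥ Q *ᵥ ((A ^ k) *ᵥ y) := by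
        have := Finset.single_le_sum
          (f := fun k => ((A ^ k) *ᵥ y) ⬝ᵥ Q *ᵥ ((A ^ k) *ᵥ y))
          (fun k _ => hQnn _) (Finset.mem_range.mpr hN)
        simpa using this
      linarith
    have := le_of_tendsto hSlim hub
    linarith
  have hherm : X.IsHermitian := by
    have h : Xᴴ = Xᵀ := by
      funext i j
      simp [Matrix.conjTranspose_apply]
    rw [Matrix.IsHermitian, h, hXsym]
  refine ⟨Matrix.PosSemidef.of_dotProduct_mulVec_nonneg hherm fun y => by simpa using le_trans (hQnn y) (hmain y), fun hQpd => Matrix.PosDef.of_dotProduct_mulVec_pos hherm ?_⟩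
  intro y hy
  have h1 : 0 < y ⬝ᵥ Q *ᵥ y := by simpa using hQpd.dotProduct_mulVec_pos hy
  simpa using lt_of_lt_of_le h1 (hmain y)
end

section
/- Comparison lemma for zero-sum LQ games: Let (K, L) and (K̂, L̂) be two pairs of stabilizing feedback gains with corresponding value matrices X and X̂ (solutions of the respective Lyapunov equations). Writing A_{K,L} = A - B₁K - B₂L, U = R₁K - B₁ᵀX A_{K,L}, V = -R₂L - B₂ᵀX A_{K,L}, one has X - X̂ = A_{K̂,L̂}ᵀ(X - X̂)A_{K̂,L̂} + (K - K̂)ᵀU + Uᵀ(K - K̂) - (K - K̂)ᵀR₁(K - K̂) + (L - L̂)ᵀV + Vᵀ(L - L̂) + (L - L̂)ᵀR₂(L - L̂) - (A_{K,L} - A_{K̂,L̂})ᵀ X (A_{K,L} - A_{K̂,L̂}). -/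
open Matrix

open Filter Topology
open scoped ENNReal NNReal

attribute [local instance] Matrix.linftyOpNormedRing Matrix.linftyOpNormedAlgebra

private lemma lyap_unique_aux {n : ℕ} [NeZero n] (M Y : Matrix (Fin n) (Fin n) ℂ)
    (h : ∀ μ ∈ spectrum ℂ M, ‖μ‖ < 1)
    (hY : Mᵀ * Y * M = Y) : Y = 0 := by
  have hne := spectrum.nonempty M
  have hρ : spectralRadius ℂ M < 1 := by
    have := spectrum.spectralRadius_lt_of_forall_lt_of_nonempty hne
      (r := 1) (fun k hk => by simpa [← NNReal.coe_lt_coe] using h k hk)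
    simpa using this
  have hG := spectrum.pow_nnnorm_pow_one_div_tendsto_nhds_spectralRadius M
  have hev : ∀ᶠ (k : ℕ) in atTop, (‖M ^ k‖₊ : ℝ≥0∞) ^ (1 / (k:ℝ)) < 1 :=
    hG.eventually_lt_const hρ
  obtain ⟨N, hN, hN1⟩ := (hev.and (eventually_ge_atTop 1)).exists
  have hpos : (0:ℝ) < 1 / (N:ℝ) := by positivity
  have hnorm : ‖M ^ N‖ < 1 := by
    have h1 : (‖M ^ N‖₊ : ℝ≥0∞) < 1 := by
      by_contra hc
      push_neg at hc
      exact absurd (ENNReal.one_le_rpow hc hpos) (not_le.mpr hN)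
    have := ENNReal.coe_lt_one_iff.mp h1
    simpa [← NNReal.coe_lt_one] using this
  have hinv : ∀ k : ℕ, (M ^ k)ᵀ * Y * M ^ k = Y := by
    intro k
    induction k with
    | zero => simp
    | succ k ih =>
      have : M ^ (k+1) = M ^ k * M := pow_succ M k
      rw [this, Matrix.transpose_mul]
      calc Mᵀ * (M ^ k)ᵀ * Y * (M ^ k * M)
          = Mᵀ * ((M ^ k)ᵀ * Y * M ^ k) * M := by noncomm_ring
        _ = Mᵀ * Y * M := by rw [ih]
        _ = Y := hY
  have hT : Continuous fun A : Matrix (Fin n) (Fin n) ℂ => Aᵀ :=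
    LinearMap.continuous_of_finiteDimensional
      (Matrix.transposeLinearEquiv (Fin n) (Fin n) ℂ ℂ).toLinearMap
  have hg : Continuous fun A : Matrix (Fin n) (Fin n) ℂ => Aᵀ * Y * A :=
    ((hT.mul continuous_const).mul continuous_id)
  have hpow : Tendsto (fun m : ℕ => (M ^ N) ^ m) atTop (𝓝 0) :=
    tendsto_pow_atTop_nhds_zero_of_norm_lt_one hnorm
  have hlim : Tendsto (fun m : ℕ => ((M ^ N) ^ m)ᵀ * Y * (M ^ N) ^ m) atTop (𝓝 (0ᵀ * Y * 0)) :=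
    (hg.tendsto 0).comp hpow
  have hconst : ∀ m : ℕ, ((M ^ N) ^ m)ᵀ * Y * (M ^ N) ^ m = Y := by
    intro m; rw [← pow_mul]; exact hinv (N * m)
  have h0 := tendsto_nhds_unique (hlim.congr hconst) tendsto_const_nhds
  simpa using h0.symm

private lemma lyap_unique_real {n : ℕ} (M Y : Matrix (Fin n) (Fin n) ℝ)
    (h : IsSchur M) (hY : Mᵀ * Y * M = Y) : Y = 0 := by
  rcases Nat.eq_zero_or_pos n with hn | hn
  · subst hn; exact Subsingleton.elim _ _
  haveI : NeZero n := ⟨hn.ne'⟩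
  set φ : Matrix (Fin n) (Fin n) ℝ →+* Matrix (Fin n) (Fin n) ℂ :=
    Complex.ofRealHom.mapMatrix with hφ
  have hmap : (M.map Complex.ofReal)ᵀ * Y.map Complex.ofReal * M.map Complex.ofReal
      = Y.map Complex.ofReal := by
    have := congrArg φ hY
    simp [hφ, RingHom.mapMatrix_apply, _root_.map_mul, Matrix.transpose_map] at this
    exact this
  have h0 := lyap_unique_aux (M.map Complex.ofReal) (Y.map Complex.ofReal) h hmap
  ext i j
  have := congrFun (congrFun h0 i) j
  simpa using this

/-- Comparison lemma for zero-sum LQ games (form centered at `(K, L)`). -/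
theorem lq_game_comparison {n m₁ m₂ : ℕ}
    (A : Matrix (Fin n) (Fin n) ℝ) (B₁ : Matrix (Fin n) (Fin m₁) ℝ)
    (B₂ : Matrix (Fin n) (Fin m₂) ℝ) (Q : Matrix (Fin n) (Fin n) ℝ)
    (R₁ : Matrix (Fin m₁) (Fin m₁) ℝ) (R₂ : Matrix (Fin m₂) (Fin m₂) ℝ)
    (K Khat : Matrix (Fin m₁) (Fin n) ℝ) (L Lhat : Matrix (Fin m₂) (Fin n) ℝ)
    (X Xhat : Matrix (Fin n) (Fin n) ℝ)
    (hQ : Q.IsSymm) (hR₁ : R₁.PosDef) (hR₂ : R₂.PosDef)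
    (hstab : IsSchur (A - B₁ * K - B₂ * L))
    (hstabhat : IsSchur (A - B₁ * Khat - B₂ * Lhat))
    (hX : (A - B₁ * K - B₂ * L)ᵀ * X * (A - B₁ * K - B₂ * L)
            + Q + Kᵀ * R₁ * K - Lᵀ * R₂ * L = X)
    (hXhat : (A - B₁ * Khat - B₂ * Lhat)ᵀ * Xhat * (A - B₁ * Khat - B₂ * Lhat)
            + Q + Khatᵀ * R₁ * Khat - Lhatᵀ * R₂ * Lhat = Xhat)
    (U : Matrix (Fin m₁) (Fin n) ℝ) (V : Matrix (Fin m₂) (Fin n) ℝ)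
    (hU : U = R₁ * K - B₁ᵀ * X * (A - B₁ * K - B₂ * L))
    (hV : V = -(R₂ * L) - B₂ᵀ * X * (A - B₁ * K - B₂ * L)) :
    X - Xhat =
      (A - B₁ * Khat - B₂ * Lhat)ᵀ * (X - Xhat) * (A - B₁ * Khat - B₂ * Lhat)
      + (K - Khat)ᵀ * U + Uᵀ * (K - Khat) - (K - Khat)ᵀ * R₁ * (K - Khat)
      + (L - Lhat)ᵀ * V + Vᵀ * (L - Lhat) + (L - Lhat)ᵀ * R₂ * (L - Lhat)
      - ((A - B₁ * K - B₂ * L) - (A - B₁ * Khat - B₂ * Lhat))ᵀ * X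
          * ((A - B₁ * K - B₂ * L) - (A - B₁ * Khat - B₂ * Lhat)) := by
  subst hU hV
  have hQs : Qᵀ = Q := hQ
  have hR₁s : R₁ᵀ = R₁ := by
    exact (show R₁.IsSymm by simpa [Matrix.conjTranspose_eq_transpose_of_trivial] using hR₁.isHermitian)
  have hR₂s : R₂ᵀ = R₂ := by
    exact (show R₂.IsSymm by simpa [Matrix.conjTranspose_eq_transpose_of_trivial] using hR₂.isHermitian)
  -- X is symmetric
  have h2 : Xᵀ = (A - B₁ * K - B₂ * L)ᵀ * Xᵀ * (A - B₁ * K - B₂ * L)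
      + Q + Kᵀ * R₁ * K - Lᵀ * R₂ * L := by
    conv_lhs => rw [← hX]
    simp only [Matrix.transpose_add, Matrix.transpose_sub, Matrix.transpose_mul,
      Matrix.transpose_transpose, hQs, hR₁s, hR₂s, Matrix.mul_assoc]
  have key : (A - B₁ * K - B₂ * L)ᵀ * (X - Xᵀ) * (A - B₁ * K - B₂ * L) = X - Xᵀ := by
    calc (A - B₁ * K - B₂ * L)ᵀ * (X - Xᵀ) * (A - B₁ * K - B₂ * L)
        = ((A - B₁ * K - B₂ * L)ᵀ * X * (A - B₁ * K - B₂ * L)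
            + Q + Kᵀ * R₁ * K - Lᵀ * R₂ * L)
          - ((A - B₁ * K - B₂ * L)ᵀ * Xᵀ * (A - B₁ * K - B₂ * L)
            + Q + Kᵀ * R₁ * K - Lᵀ * R₂ * L) := by
          simp only [Matrix.mul_sub, Matrix.sub_mul]
          abel
      _ = X - Xᵀ := by rw [hX, ← h2]
  have hXs : Xᵀ = X := by
    have := lyap_unique_real _ _ hstab key
    have := sub_eq_zero.mp this
    exact this.symm
  conv_lhs => rw [← hX, ← hXhat]
  simp only [Matrix.transpose_add, Matrix.transpose_sub, Matrix.transpose_mul,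
    Matrix.transpose_neg, Matrix.transpose_transpose, Matrix.mul_add, Matrix.add_mul,
    Matrix.mul_sub, Matrix.sub_mul, Matrix.mul_neg, Matrix.neg_mul,
    hXs, hQs, hR₁s, hR₂s, Matrix.mul_assoc]
  abel
end

section
/- Second comparison lemma form: with the same setup, X - X̂ = A_{K,L}ᵀ(X - X̂)A_{K,L} + (K - K̂)ᵀÛ + Ûᵀ(K - K̂) + (K - K̂)ᵀR₁(K - K̂) + (L - L̂)ᵀV̂ + V̂ᵀ(L - L̂) - (L - L̂)ᵀR₂(L - L̂) + (A_{K,L} - A_{K̂,L̂})ᵀ X̂ (A_{K,L} - A_{K̂,L̂}), where Û = R₁K̂ - B₁ᵀX̂ A_{K̂,L̂} and V̂ = -R₂L̂ - B₂ᵀX̂ A_{K̂,L̂}. -/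
open Matrix

open scoped NNReal ENNReal

section Aux

open Filter

attribute [local instance] Matrix.linftyOpNormedRing Matrix.linftyOpNormedAlgebra

noncomputable local instance {n : ℕ} : CompleteSpace (Matrix (Fin n) (Fin n) ℂ) :=
  FiniteDimensional.complete ℂ (Matrix (Fin n) (Fin n) ℂ)

/-- In a complex Banach algebra, powers of an element with spectral radius `< 1` tend to zero. -/
theorem tendsto_pow_of_spectralRadius_lt_one {A : Type*} [NormedRing A] [NormedAlgebra ℂ A]
    [CompleteSpace A] (a : A) (h : spectralRadius ℂ a < 1) :
    Tendsto (fun k : ℕ => a ^ k) atTop (nhds 0) := by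
  obtain ⟨r, hr, hr1⟩ := exists_between h
  lift r to ℝ≥0 using (hr1.trans ENNReal.one_lt_top).ne
  rw [show ((1 : ℝ≥0∞)) = ((1 : ℝ≥0) : ℝ≥0∞) from rfl, ENNReal.coe_lt_coe] at hr1
  have hgel := spectrum.pow_nnnorm_pow_one_div_tendsto_nhds_spectralRadius a
  have hev : ∀ᶠ k : ℕ in atTop, (‖a ^ k‖₊ : ℝ≥0∞) ^ (1 / (k : ℝ)) < (r : ℝ≥0∞) :=
    hgel.eventually_lt_const hr
  have hev2 : ∀ᶠ k : ℕ in atTop, ‖a ^ k‖ ≤ (r : ℝ) ^ k := by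
    filter_upwards [hev, eventually_ge_atTop 1] with k hk hk1
    have hk0 : (k : ℝ) ≠ 0 := Nat.cast_ne_zero.mpr (by omega)
    have h1 : ((‖a ^ k‖₊ : ℝ≥0∞) ^ (1 / (k : ℝ))) ^ (k : ℝ) ≤ ((r : ℝ≥0∞)) ^ (k : ℝ) :=
      ENNReal.rpow_le_rpow hk.le (by positivity)
    rw [← ENNReal.rpow_mul, one_div, inv_mul_cancel₀ hk0, ENNReal.rpow_one] at h1
    have h2 : (‖a ^ k‖₊ : ℝ≥0∞) ≤ ((r ^ (k : ℝ) : ℝ≥0) : ℝ≥0∞) := by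
      rwa [ENNReal.coe_rpow_of_nonneg _ (by positivity)]
    rw [ENNReal.coe_le_coe] at h2
    calc ‖a ^ k‖ = ((‖a ^ k‖₊ : ℝ≥0) : ℝ) := rfl
      _ ≤ ((r ^ (k : ℝ) : ℝ≥0) : ℝ) := by exact_mod_cast h2
      _ = (r : ℝ) ^ (k : ℝ) := by
          rw [NNReal.coe_rpow]
      _ = (r : ℝ) ^ k := by rw [Real.rpow_natCast]
  exact squeeze_zero_norm' hev2
    (tendsto_pow_atTop_nhds_zero_of_lt_one r.coe_nonneg (by exact_mod_cast hr1))

theorem spectrum_transpose {n : ℕ} (M : Matrix (Fin n) (Fin n) ℂ) :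
    spectrum ℂ Mᵀ = spectrum ℂ M := by
  ext z
  simp only [spectrum.mem_iff, Matrix.isUnit_iff_isUnit_det]
  have : ((algebraMap ℂ (Matrix (Fin n) (Fin n) ℂ)) z - Mᵀ) =
      ((algebraMap ℂ (Matrix (Fin n) (Fin n) ℂ)) z - M)ᵀ := by
    rw [Matrix.transpose_sub]
    congr 1
    simp [Matrix.algebraMap_eq_diagonal, Matrix.diagonal_transpose]
  rw [this, Matrix.det_transpose]

/-- If `M` is Schur stable and `Mᵀ D M = D` then `D = 0`. -/
theorem eq_zero_of_schur_fixed {n : ℕ} (M D : Matrix (Fin n) (Fin n) ℝ)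
    (hM : IsSchur M) (hD : Mᵀ * D * M = D) : D = 0 := by
  rcases Nat.eq_zero_or_pos n with hn | hn
  · subst hn; exact Subsingleton.elim _ _
  haveI : Nonempty (Fin n) := ⟨⟨0, hn⟩⟩
  set Mc : Matrix (Fin n) (Fin n) ℂ := M.map Complex.ofReal with hMc
  set Dc : Matrix (Fin n) (Fin n) ℂ := D.map Complex.ofReal with hDc
  have hmapmul : ∀ (P R : Matrix (Fin n) (Fin n) ℝ),
      (P * R).map Complex.ofReal = P.map Complex.ofReal * R.map Complex.ofReal := fun P R =>
    Matrix.map_mul (f := Complex.ofRealHom)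
  have hDceq : Mcᵀ * Dc * Mc = Dc := by
    rw [hMc, hDc, ← Matrix.transpose_map, ← hmapmul, ← hmapmul, hD]
  have hiter : ∀ k : ℕ, (Mcᵀ) ^ k * Dc * Mc ^ k = Dc := by
    intro k
    induction k with
    | zero => simp
    | succ k ih =>
      calc (Mcᵀ) ^ (k + 1) * Dc * Mc ^ (k + 1)
          = Mcᵀ ^ k * (Mcᵀ * Dc * Mc) * Mc ^ k := by
            rw [pow_succ, pow_succ']
            noncomm_ring
        _ = Dc := by rw [hDceq, ih]
  have hsrM : spectralRadius ℂ Mc < 1 := by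
    have h1 : spectralRadius ℂ Mc < ((1 : ℝ≥0) : ℝ≥0∞) :=
      spectrum.spectralRadius_lt_of_forall_lt Mc fun z hz => by
        simpa [← NNReal.coe_lt_coe, coe_nnnorm] using hM z hz
    simpa using h1
  have hsrMT : spectralRadius ℂ (Mcᵀ) < 1 := by
    unfold spectralRadius
    rw [spectrum_transpose]
    exact hsrM
  have h1 : Tendsto (fun k : ℕ => Mc ^ k) atTop (nhds 0) :=
    tendsto_pow_of_spectralRadius_lt_one Mc hsrM
  have h2 : Tendsto (fun k : ℕ => (Mcᵀ) ^ k) atTop (nhds 0) :=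
    tendsto_pow_of_spectralRadius_lt_one (Mcᵀ) hsrMT
  have h3 : Tendsto (fun k : ℕ => (Mcᵀ) ^ k * Dc * Mc ^ k) atTop (nhds 0) := by
    have := ((h2.mul tendsto_const_nhds).mul h1 :
      Tendsto (fun k : ℕ => (Mcᵀ) ^ k * Dc * Mc ^ k) atTop (nhds (0 * Dc * 0)))
    simpa using this
  have h4 : Tendsto (fun _ : ℕ => Dc) atTop (nhds 0) := by
    simpa only [funext hiter] using h3
  have hDc0 : Dc = 0 := tendsto_nhds_unique tendsto_const_nhds h4
  ext i j
  have := congrFun (congrFun hDc0 i) j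
  simpa [hDc, Matrix.map_apply] using this

end Aux

/-- Comparison lemma for zero-sum LQ games (form centered at `(K̂, L̂)`). -/
theorem lq_game_comparison' {n m₁ m₂ : ℕ}
    (A : Matrix (Fin n) (Fin n) ℝ) (B₁ : Matrix (Fin n) (Fin m₁) ℝ)
    (B₂ : Matrix (Fin n) (Fin m₂) ℝ) (Q : Matrix (Fin n) (Fin n) ℝ)
    (R₁ : Matrix (Fin m₁) (Fin m₁) ℝ) (R₂ : Matrix (Fin m₂) (Fin m₂) ℝ)
    (K Khat : Matrix (Fin m₁) (Fin n) ℝ) (L Lhat : Matrix (Fin m₂) (Fin n) ℝ)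
    (X Xhat : Matrix (Fin n) (Fin n) ℝ)
    (hQ : Q.IsSymm) (hR₁ : R₁.PosDef) (hR₂ : R₂.PosDef)
    (hstab : IsSchur (A - B₁ * K - B₂ * L))
    (hstabhat : IsSchur (A - B₁ * Khat - B₂ * Lhat))
    (hX : (A - B₁ * K - B₂ * L)ᵀ * X * (A - B₁ * K - B₂ * L)
            + Q + Kᵀ * R₁ * K - Lᵀ * R₂ * L = X)
    (hXhat : (A - B₁ * Khat - B₂ * Lhat)ᵀ * Xhat * (A - B₁ * Khat - B₂ * Lhat)
            + Q + Khatᵀ * R₁ * Khat - Lhatᵀ * R₂ * Lhat = Xhat)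
    (Uhat : Matrix (Fin m₁) (Fin n) ℝ) (Vhat : Matrix (Fin m₂) (Fin n) ℝ)
    (hUhat : Uhat = R₁ * Khat - B₁ᵀ * Xhat * (A - B₁ * Khat - B₂ * Lhat))
    (hVhat : Vhat = -(R₂ * Lhat) - B₂ᵀ * Xhat * (A - B₁ * Khat - B₂ * Lhat)) :
    X - Xhat =
      (A - B₁ * K - B₂ * L)ᵀ * (X - Xhat) * (A - B₁ * K - B₂ * L)
      + (K - Khat)ᵀ * Uhat + Uhatᵀ * (K - Khat) + (K - Khat)ᵀ * R₁ * (K - Khat)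
      + (L - Lhat)ᵀ * Vhat + Vhatᵀ * (L - Lhat) - (L - Lhat)ᵀ * R₂ * (L - Lhat)
      + ((A - B₁ * K - B₂ * L) - (A - B₁ * Khat - B₂ * Lhat))ᵀ * Xhat
          * ((A - B₁ * K - B₂ * L) - (A - B₁ * Khat - B₂ * Lhat)) := by
  have hR1s : R₁ᵀ = R₁ := by
    have := hR₁.1.eq
    rwa [Matrix.conjTranspose_eq_transpose_of_trivial] at this
  have hR2s : R₂ᵀ = R₂ := by
    have := hR₂.1.eq
    rwa [Matrix.conjTranspose_eq_transpose_of_trivial] at this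
  have hQs : Qᵀ = Q := hQ
  -- X̂ is symmetric
  have hXhatT : (A - B₁ * Khat - B₂ * Lhat)ᵀ * Xhatᵀ * (A - B₁ * Khat - B₂ * Lhat)
      + Q + Khatᵀ * R₁ * Khat - Lhatᵀ * R₂ * Lhat = Xhatᵀ := by
    have h := congrArg Matrix.transpose hXhat
    simp only [Matrix.transpose_sub, Matrix.transpose_add, Matrix.transpose_mul,
      Matrix.transpose_transpose, hQs, hR1s, hR2s, Matrix.mul_assoc] at h
    simp only [Matrix.transpose_sub, Matrix.transpose_mul, Matrix.transpose_transpose,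
      Matrix.mul_assoc]
    exact h
  have hsym : Xhatᵀ = Xhat := by
    have e1 : (A - B₁ * Khat - B₂ * Lhat)ᵀ * Xhat * (A - B₁ * Khat - B₂ * Lhat)
        = Xhat - (Q + Khatᵀ * R₁ * Khat - Lhatᵀ * R₂ * Lhat) := by
      conv_rhs => rw [← hXhat]
      abel
    have e2 : (A - B₁ * Khat - B₂ * Lhat)ᵀ * Xhatᵀ * (A - B₁ * Khat - B₂ * Lhat)
        = Xhatᵀ - (Q + Khatᵀ * R₁ * Khat - Lhatᵀ * R₂ * Lhat) := by
      conv_rhs => rw [← hXhatT]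
      abel
    have hfix : (A - B₁ * Khat - B₂ * Lhat)ᵀ * (Xhat - Xhatᵀ) * (A - B₁ * Khat - B₂ * Lhat)
        = Xhat - Xhatᵀ := by
      have hexp : (A - B₁ * Khat - B₂ * Lhat)ᵀ * (Xhat - Xhatᵀ) * (A - B₁ * Khat - B₂ * Lhat)
          = (A - B₁ * Khat - B₂ * Lhat)ᵀ * Xhat * (A - B₁ * Khat - B₂ * Lhat)
            - (A - B₁ * Khat - B₂ * Lhat)ᵀ * Xhatᵀ * (A - B₁ * Khat - B₂ * Lhat) := by
        noncomm_ring
      rw [hexp, e1, e2]; abel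
    have h0 := eq_zero_of_schur_fixed _ _ hstabhat hfix
    rw [sub_eq_zero] at h0
    exact h0.symm
  subst hUhat hVhat
  conv_lhs => rw [← hX, ← hXhat]
  simp only [Matrix.transpose_sub, Matrix.transpose_add, Matrix.transpose_mul,
    Matrix.transpose_neg, Matrix.transpose_transpose, hR1s, hR2s, hsym]
  set_option maxHeartbeats 2000000 in
  simp only [Matrix.sub_mul, Matrix.mul_sub, Matrix.add_mul, Matrix.mul_add, Matrix.neg_mul, Matrix.mul_neg, Matrix.mul_assoc, neg_neg]
  set_option maxHeartbeats 2000000 in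
  abel
end

section
/- Riccati-map comparison identity: Let L ∈ ℝ^{m₂×n}, let X̃ be a symmetric matrix with R₁ + B₁ᵀX̃B₁ invertible, let K = (R₁ + B₁ᵀXB₁)^{-1}B₁ᵀX(A - B₂L) where X is the value matrix of the stabilizing pair (K, L). Set E = R₁ + B₁ᵀX̃B₁ and F = B₁ᵀX̃(A - B₂L). Then X - X̃ = A_{K,L}ᵀ(X - X̃)A_{K,L} + R(X̃) + (EK - F)ᵀE^{-1}(EK - F), where R(X̃) = (A - B₂L)ᵀX̃(A - B₂L) - X̃ + Q - LᵀR₂L - (A - B₂L)ᵀX̃B₁(R₁ + B₁ᵀX̃B₁)^{-1}B₁ᵀX̃(A - B₂L) is the Riccati map. -/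
open Matrix

private lemma quad_expand {m n : ℕ} (E : Matrix (Fin m) (Fin m) ℝ)
    (K F : Matrix (Fin m) (Fin n) ℝ)
    (h1 : E * E⁻¹ = 1) (h2 : E⁻¹ * E = 1) (hEt : Eᵀ = E) :
    (E * K - F)ᵀ * E⁻¹ * (E * K - F)
      = Kᵀ * E * K - Kᵀ * F - Fᵀ * K + Fᵀ * E⁻¹ * F := by
  rw [transpose_sub, transpose_mul, hEt]
  simp only [Matrix.sub_mul, Matrix.mul_sub, Matrix.mul_assoc]
  have c1 : ∀ Y : Matrix (Fin m) (Fin n) ℝ, E * (E⁻¹ * Y) = Y := fun Y => by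
    rw [← Matrix.mul_assoc, h1, Matrix.one_mul]
  have c2 : ∀ Y : Matrix (Fin m) (Fin n) ℝ, E⁻¹ * (E * Y) = Y := fun Y => by
    rw [← Matrix.mul_assoc, h2, Matrix.one_mul]
  simp only [c1, c2]
  abel

set_option maxHeartbeats 2000000 in
/-- Riccati-map comparison identity. -/
theorem riccati_map_comparison {n m₁ m₂ : ℕ}
    (A : Matrix (Fin n) (Fin n) ℝ) (B₁ : Matrix (Fin n) (Fin m₁) ℝ)
    (B₂ : Matrix (Fin n) (Fin m₂) ℝ) (Q : Matrix (Fin n) (Fin n) ℝ)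
    (R₁ : Matrix (Fin m₁) (Fin m₁) ℝ) (R₂ : Matrix (Fin m₂) (Fin m₂) ℝ)
    (K : Matrix (Fin m₁) (Fin n) ℝ) (L : Matrix (Fin m₂) (Fin n) ℝ)
    (X Xt : Matrix (Fin n) (Fin n) ℝ)
    (E : Matrix (Fin m₁) (Fin m₁) ℝ) (F : Matrix (Fin m₁) (Fin n) ℝ)
    (hQ : Q.IsSymm) (hR₁ : R₁.PosDef) (hR₂ : R₂.PosDef) (hXt : Xt.IsSymm)
    (hEinv : IsUnit (R₁ + B₁ᵀ * Xt * B₁))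
    (hXinv : IsUnit (R₁ + B₁ᵀ * X * B₁))
    (hstab : IsSchur (A - B₁ * K - B₂ * L))
    (hX : (A - B₁ * K - B₂ * L)ᵀ * X * (A - B₁ * K - B₂ * L)
            + Q + Kᵀ * R₁ * K - Lᵀ * R₂ * L = X)
    (hK : K = (R₁ + B₁ᵀ * X * B₁)⁻¹ * (B₁ᵀ * X * (A - B₂ * L)))
    (hE : E = R₁ + B₁ᵀ * Xt * B₁)
    (hF : F = B₁ᵀ * Xt * (A - B₂ * L)) :
    X - Xt =
      (A - B₁ * K - B₂ * L)ᵀ * (X - Xt) * (A - B₁ * K - B₂ * L)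
      + ((A - B₂ * L)ᵀ * Xt * (A - B₂ * L) - Xt + Q - Lᵀ * R₂ * L
          - (A - B₂ * L)ᵀ * Xt * B₁ * (R₁ + B₁ᵀ * Xt * B₁)⁻¹ * (B₁ᵀ * Xt * (A - B₂ * L)))
      + (E * K - F)ᵀ * E⁻¹ * (E * K - F) := by

  subst hE hF
  have hR₁t : R₁ᵀ = R₁ := hR₁.isHermitian.eq
  have hEt : (R₁ + B₁ᵀ * Xt * B₁)ᵀ = R₁ + B₁ᵀ * Xt * B₁ := by
    simp [transpose_add, transpose_mul, Matrix.mul_assoc, hXt.eq, hR₁t]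
  have hdet : IsUnit (R₁ + B₁ᵀ * Xt * B₁).det :=
    (Matrix.isUnit_iff_isUnit_det _).mp hEinv
  have h1 : (R₁ + B₁ᵀ * Xt * B₁) * (R₁ + B₁ᵀ * Xt * B₁)⁻¹ = 1 :=
    Matrix.mul_nonsing_inv _ hdet
  have h2 : (R₁ + B₁ᵀ * Xt * B₁)⁻¹ * (R₁ + B₁ᵀ * Xt * B₁) = 1 :=
    Matrix.nonsing_inv_mul _ hdet
  rw [quad_expand _ _ _ h1 h2 hEt]
  conv_lhs => rw [← hX]
  simp only [transpose_sub, transpose_add, transpose_mul,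
    transpose_transpose, hXt.eq, hR₁t, Matrix.sub_mul, Matrix.mul_sub,
    Matrix.add_mul, Matrix.mul_add, Matrix.mul_assoc]
  abel
end

section
/- Riccati map expansion in L: Suppose X̃ solves the DARE (A - B₂L̃)ᵀX̃(A - B₂L̃) - X̃ + Q - L̃ᵀR₂L̃ - (A - B₂L̃)ᵀX̃B₁(R₁ + B₁ᵀX̃B₁)^{-1}B₁ᵀX̃(A - B₂L̃) = 0, with K̃ = (R₁ + B₁ᵀX̃B₁)^{-1}B₁ᵀX̃(A - B₂L̃) and Ṽ = -R₂L̃ - B₂ᵀX̃(A - B₁K̃ - B₂L̃). Then for any L, the Riccati map evaluated at X̃ with parameter L equals (L - L̃)ᵀṼ + Ṽᵀ(L - L̃) - (L - L̃)ᵀO(L - L̃), where O = R₂ - B₂ᵀX̃B₂ + B₂ᵀX̃B₁(R₁ + B₁ᵀX̃B₁)^{-1}B₁ᵀX̃B₂. -/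
open Matrix

set_option maxHeartbeats 1000000 in
/-- Riccati map expansion in `L` around a DARE solution `X̃` at `L̃`. -/
theorem riccati_map_expansion {n m₁ m₂ : ℕ}
    (A : Matrix (Fin n) (Fin n) ℝ) (B₁ : Matrix (Fin n) (Fin m₁) ℝ)
    (B₂ : Matrix (Fin n) (Fin m₂) ℝ) (Q : Matrix (Fin n) (Fin n) ℝ)
    (R₁ : Matrix (Fin m₁) (Fin m₁) ℝ) (R₂ : Matrix (Fin m₂) (Fin m₂) ℝ)
    (Lt : Matrix (Fin m₂) (Fin n) ℝ) (Xt : Matrix (Fin n) (Fin n) ℝ)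
    (Kt : Matrix (Fin m₁) (Fin n) ℝ)
    (Vt : Matrix (Fin m₂) (Fin n) ℝ) (O : Matrix (Fin m₂) (Fin m₂) ℝ)
    (hQ : Q.IsSymm) (hR₁ : R₁.PosDef) (hR₂ : R₂.PosDef) (hXt : Xt.IsSymm)
    (hinv : IsUnit (R₁ + B₁ᵀ * Xt * B₁))
    (hDARE : (A - B₂ * Lt)ᵀ * Xt * (A - B₂ * Lt) - Xt + Q - Ltᵀ * R₂ * Lt
        - (A - B₂ * Lt)ᵀ * Xt * B₁ * (R₁ + B₁ᵀ * Xt * B₁)⁻¹ * (B₁ᵀ * Xt * (A - B₂ * Lt)) = 0)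
    (hKt : Kt = (R₁ + B₁ᵀ * Xt * B₁)⁻¹ * (B₁ᵀ * Xt * (A - B₂ * Lt)))
    (hVt : Vt = -(R₂ * Lt) - B₂ᵀ * Xt * (A - B₁ * Kt - B₂ * Lt))
    (hO : O = R₂ - B₂ᵀ * Xt * B₂
        + B₂ᵀ * Xt * B₁ * (R₁ + B₁ᵀ * Xt * B₁)⁻¹ * (B₁ᵀ * Xt * B₂)) :
    ∀ L : Matrix (Fin m₂) (Fin n) ℝ,
      (A - B₂ * L)ᵀ * Xt * (A - B₂ * L) - Xt + Q - Lᵀ * R₂ * L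
        - (A - B₂ * L)ᵀ * Xt * B₁ * (R₁ + B₁ᵀ * Xt * B₁)⁻¹ * (B₁ᵀ * Xt * (A - B₂ * L))
      = (L - Lt)ᵀ * Vt + Vtᵀ * (L - Lt) - (L - Lt)ᵀ * O * (L - Lt) := by
  intro L
  have hXt' : Xtᵀ = Xt := hXt
  have hR1 : R₁ᵀ = R₁ := by
    have := hR₁.1; rw [Matrix.IsHermitian] at this
    simpa [Matrix.conjTranspose_eq_transpose_of_trivial] using this
  have hR2 : R₂ᵀ = R₂ := by
    have := hR₂.1; rw [Matrix.IsHermitian] at this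
    simpa [Matrix.conjTranspose_eq_transpose_of_trivial] using this
  set S : Matrix (Fin m₁) (Fin m₁) ℝ := (R₁ + B₁ᵀ * Xt * B₁)⁻¹ with hSdef
  have hSsym : Sᵀ = S := by
    rw [hSdef, Matrix.transpose_nonsing_inv]
    congr 1
    simp [transpose_add, transpose_mul, hXt', hR1, Matrix.mul_assoc]
  set M : Matrix (Fin n) (Fin n) ℝ := Xt - Xt * B₁ * S * (B₁ᵀ * Xt) with hMdef
  have hMsym : Mᵀ = M := by
    simp [hMdef, transpose_sub, transpose_mul, hXt', hSsym, Matrix.mul_assoc]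
  have hE : ∀ L' : Matrix (Fin m₂) (Fin n) ℝ,
      (A - B₂ * L')ᵀ * Xt * (A - B₂ * L') - Xt + Q - L'ᵀ * R₂ * L'
        - (A - B₂ * L')ᵀ * Xt * B₁ * S * (B₁ᵀ * Xt * (A - B₂ * L'))
      = (A - B₂ * L')ᵀ * M * (A - B₂ * L') - Xt + Q - L'ᵀ * R₂ * L' := by
    intro L'
    rw [hMdef]
    simp only [Matrix.mul_sub, Matrix.sub_mul, Matrix.mul_assoc]
    abel
  have hDARE0 : (A - B₂ * Lt)ᵀ * M * (A - B₂ * Lt) - Xt + Q - Ltᵀ * R₂ * Lt = 0 := by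
    rw [← hE]; exact hDARE
  have hVt2 : Vt = -(B₂ᵀ * M * A) + (B₂ᵀ * M * B₂ - R₂) * Lt := by
    rw [hVt, hKt, hMdef]
    simp only [Matrix.mul_sub, Matrix.sub_mul, Matrix.mul_add, Matrix.add_mul,
      Matrix.neg_mul, Matrix.mul_neg, neg_sub, Matrix.mul_assoc]
    abel
  have hO2 : O = R₂ - B₂ᵀ * M * B₂ := by
    rw [hO, hMdef]
    simp only [Matrix.mul_sub, Matrix.sub_mul, Matrix.mul_assoc]
    abel
  rw [hE L, hVt2, hO2, ← sub_eq_zero]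
  conv_rhs => rw [← hDARE0]
  simp only [transpose_sub, transpose_add, transpose_mul, transpose_neg, transpose_transpose,
    hMsym, hR2, Matrix.sub_mul, Matrix.mul_sub, Matrix.add_mul, Matrix.mul_add,
    Matrix.neg_mul, Matrix.mul_neg, neg_neg, Matrix.mul_assoc]
  abel
end

section
/- Stationarity implies GARE: If (K*, L*) is a stabilizing pair at which both partial gradients of f vanish, i.e., R₁K* - B₁ᵀX*A* = 0 and -R₂L* - B₂ᵀX*A* = 0 where A* = A - B₁K* - B₂L* and X* is the value matrix, and if the block matrix M = [[R₁ + B₁ᵀX*B₁, B₁ᵀX*B₂],[B₂ᵀX*B₁, -R₂ + B₂ᵀX*B₂]] is invertible, then X* is symmetric and satisfies the generalized algebraic Riccati equation AᵀX*A - X* + Q - [B₁ᵀX*A; B₂ᵀX*A]ᵀ M^{-1} [B₁ᵀX*A; B₂ᵀX*A] = 0. -/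
open Matrix Filter

section SchurAux

attribute [local instance] Matrix.frobeniusNormedAddCommGroup Matrix.frobeniusNormedRing
  Matrix.frobeniusNormedAlgebra

variable {n : ℕ}

lemma schur_pow_tendsto (A : Matrix (Fin n) (Fin n) ℂ)
    (h : ∀ μ ∈ spectrum ℂ A, ‖μ‖ < 1) :
    Tendsto (fun k : ℕ => ‖A ^ k‖) atTop (nhds 0) := by
  haveI : CompleteSpace (Matrix (Fin n) (Fin n) ℂ) := FiniteDimensional.complete ℂ _
  rcases Nat.eq_zero_or_pos n with hn | hn
  · subst hn
    have : ∀ k : ℕ, A ^ k = 0 := fun k => Subsingleton.elim _ _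
    simp [this]
  · haveI : Nontrivial (Matrix (Fin n) (Fin n) ℂ) := by
      haveI : Nonempty (Fin n) := ⟨⟨0, hn⟩⟩
      infer_instance
    have hρ : spectralRadius ℂ A < 1 := by
      have := spectrum.spectralRadius_lt_of_forall_lt_of_nonempty (spectrum.nonempty A)
        (r := 1) (fun k hk => by
          simpa [← NNReal.coe_lt_coe] using h k hk)
      simpa using this
    obtain ⟨r, hr1, hr2⟩ := ENNReal.lt_iff_exists_nnreal_btwn.mp hρ
    have hgel := spectrum.pow_nnnorm_pow_one_div_tendsto_nhds_spectralRadius A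
    have hev : ∀ᶠ k : ℕ in atTop, (‖A ^ k‖₊ : ENNReal) ^ (1 / (k : ℝ)) < r :=
      hgel.eventually_lt_const hr1
    have hrlt1 : (r : ℝ) < 1 := by exact_mod_cast hr2
    have hbound : ∀ᶠ k : ℕ in atTop, ‖A ^ k‖ ≤ (r : ℝ) ^ k := by
      filter_upwards [hev, eventually_ge_atTop 1] with k hk hk1
      have hk0 : (k : ℝ) ≠ 0 := by positivity
      have : ((‖A ^ k‖₊ : ENNReal) ^ (1 / (k : ℝ))) ^ (k : ℝ) ≤ (r : ENNReal) ^ (k : ℝ) :=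
        ENNReal.rpow_le_rpow hk.le (by positivity)
      rw [← ENNReal.rpow_mul, one_div, inv_mul_cancel₀ hk0, ENNReal.rpow_one] at this
      have h2 : (‖A ^ k‖₊ : ENNReal) ≤ ((r ^ (k : ℝ) : NNReal) : ENNReal) := by
        rw [ENNReal.coe_rpow_of_nonneg _ (by positivity : (0:ℝ) ≤ (k:ℝ))]
        exact this
      have h3 : ‖A ^ k‖₊ ≤ r ^ (k : ℝ) := ENNReal.coe_le_coe.mp h2
      calc ‖A ^ k‖ = ((‖A ^ k‖₊ : NNReal) : ℝ) := rfl
        _ ≤ ((r ^ (k : ℝ) : NNReal) : ℝ) := NNReal.coe_le_coe.mpr h3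
        _ = (r : ℝ) ^ (k : ℝ) := NNReal.coe_rpow r (k : ℝ)
        _ = (r : ℝ) ^ k := Real.rpow_natCast _ k
    have hpow : Tendsto (fun k : ℕ => (r : ℝ) ^ k) atTop (nhds 0) :=
      tendsto_pow_atTop_nhds_zero_of_lt_one r.coe_nonneg hrlt1
    exact squeeze_zero' (Eventually.of_forall fun k => norm_nonneg _) hbound hpow

lemma stein_unique (A D : Matrix (Fin n) (Fin n) ℂ)
    (h : ∀ μ ∈ spectrum ℂ A, ‖μ‖ < 1)
    (hD : Aᵀ * D * A = D) : D = 0 := by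
  have hiter : ∀ k : ℕ, (A ^ k)ᵀ * D * A ^ k = D := by
    intro k
    induction k with
    | zero => simp
    | succ k ih =>
      have : A ^ (k + 1) = A ^ k * A := pow_succ A k
      rw [this, transpose_mul]
      calc Aᵀ * (A ^ k)ᵀ * D * (A ^ k * A)
          = Aᵀ * ((A ^ k)ᵀ * D * A ^ k) * A := by noncomm_ring
        _ = Aᵀ * D * A := by rw [ih]
        _ = D := hD
  have hnorm : ∀ k : ℕ, ‖D‖ ≤ ‖A ^ k‖ * ‖D‖ * ‖A ^ k‖ := by
    intro k
    conv_lhs => rw [← hiter k]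
    calc ‖(A ^ k)ᵀ * D * A ^ k‖ ≤ ‖(A ^ k)ᵀ * D‖ * ‖A ^ k‖ := norm_mul_le _ _
      _ ≤ ‖(A ^ k)ᵀ‖ * ‖D‖ * ‖A ^ k‖ := by
          gcongr; exact norm_mul_le _ _
      _ = ‖A ^ k‖ * ‖D‖ * ‖A ^ k‖ := by rw [Matrix.frobenius_norm_transpose]
  have htend : Tendsto (fun k : ℕ => ‖A ^ k‖ * ‖D‖ * ‖A ^ k‖) atTop (nhds 0) := by
    have := ((schur_pow_tendsto A h).mul_const ‖D‖).mul (schur_pow_tendsto A h)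
    simpa using this
  have : ‖D‖ ≤ 0 := ge_of_tendsto htend (Eventually.of_forall hnorm)
  have : ‖D‖ = 0 := le_antisymm this (norm_nonneg _)
  exact norm_eq_zero.mp this

end SchurAux

/-- Stationarity implies the GARE: if both partial gradients of `f` vanish at a
stabilizing pair `(K*, L*)` and the block matrix `M` is invertible, then the
value matrix `X*` is symmetric and satisfies the generalized algebraic Riccati
equation. -/
theorem stationarity_implies_gare {n m₁ m₂ : ℕ}
    (A : Matrix (Fin n) (Fin n) ℝ) (B₁ : Matrix (Fin n) (Fin m₁) ℝ)
    (B₂ : Matrix (Fin n) (Fin m₂) ℝ) (Q : Matrix (Fin n) (Fin n) ℝ)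
    (R₁ : Matrix (Fin m₁) (Fin m₁) ℝ) (R₂ : Matrix (Fin m₂) (Fin m₂) ℝ)
    (Kstar : Matrix (Fin m₁) (Fin n) ℝ) (Lstar : Matrix (Fin m₂) (Fin n) ℝ)
    (Xstar : Matrix (Fin n) (Fin n) ℝ)
    (M : Matrix (Fin m₁ ⊕ Fin m₂) (Fin m₁ ⊕ Fin m₂) ℝ)
    (hQ : Q.IsSymm) (hR₁ : R₁.PosDef) (hR₂ : R₂.PosDef)
    (hstab : IsSchur (A - B₁ * Kstar - B₂ * Lstar))
    (hX : (A - B₁ * Kstar - B₂ * Lstar)ᵀ * Xstar * (A - B₁ * Kstar - B₂ * Lstar)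
            + Q + Kstarᵀ * R₁ * Kstar - Lstarᵀ * R₂ * Lstar = Xstar)
    (hgradK : R₁ * Kstar - B₁ᵀ * Xstar * (A - B₁ * Kstar - B₂ * Lstar) = 0)
    (hgradL : -(R₂ * Lstar) - B₂ᵀ * Xstar * (A - B₁ * Kstar - B₂ * Lstar) = 0)
    (hM : M = Matrix.fromBlocks (R₁ + B₁ᵀ * Xstar * B₁) (B₁ᵀ * Xstar * B₂)
            (B₂ᵀ * Xstar * B₁) (-R₂ + B₂ᵀ * Xstar * B₂))
    (hMinv : IsUnit M) :
    Xstar.IsSymm ∧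
    Aᵀ * Xstar * A - Xstar + Q
      - (Matrix.fromRows (B₁ᵀ * Xstar * A) (B₂ᵀ * Xstar * A))ᵀ * M⁻¹
          * Matrix.fromRows (B₁ᵀ * Xstar * A) (B₂ᵀ * Xstar * A) = 0 := by
  have hR₁s : R₁ᵀ = R₁ := by
    have h : R₁ᴴ = R₁ := hR₁.1
    rwa [Matrix.conjTranspose_eq_transpose_of_trivial] at h
  have hR₂s : R₂ᵀ = R₂ := by
    have h : R₂ᴴ = R₂ := hR₂.1
    rwa [Matrix.conjTranspose_eq_transpose_of_trivial] at h
  set As := A - B₁ * Kstar - B₂ * Lstar with hAs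
  -- transpose of the value equation
  have hXT : Asᵀ * Xstarᵀ * As + Q + Kstarᵀ * R₁ * Kstar - Lstarᵀ * R₂ * Lstar = Xstarᵀ := by
    have h := congrArg Matrix.transpose hX
    simp only [Matrix.transpose_sub, Matrix.transpose_add, Matrix.transpose_mul,
      Matrix.transpose_transpose, hQ.eq, hR₁s, hR₂s] at h
    simpa only [Matrix.mul_assoc] using h
  -- Stein equation for the asymmetry
  have hstein : Asᵀ * (Xstar - Xstarᵀ) * As = Xstar - Xstarᵀ := by
    calc Asᵀ * (Xstar - Xstarᵀ) * As
        = (Asᵀ * Xstar * As + Q + Kstarᵀ * R₁ * Kstar - Lstarᵀ * R₂ * Lstar)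
          - (Asᵀ * Xstarᵀ * As + Q + Kstarᵀ * R₁ * Kstar - Lstarᵀ * R₂ * Lstar) := by
          noncomm_ring
      _ = Xstar - Xstarᵀ := by rw [hX, hXT]
  have hsym : Xstar.IsSymm := by
    have hmap : ((Asᵀ * (Xstar - Xstarᵀ) * As).map (Complex.ofRealHom : ℝ →+* ℂ))
        = (Xstar - Xstarᵀ).map (Complex.ofRealHom : ℝ →+* ℂ) := by rw [hstein]
    rw [Matrix.map_mul, Matrix.map_mul, Matrix.transpose_map] at hmap
    have hzero : (Xstar - Xstarᵀ).map (Complex.ofRealHom : ℝ →+* ℂ) = 0 :=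
      stein_unique _ _ hstab hmap
    have : Xstar - Xstarᵀ = 0 := by
      ext i j
      have h0 := congrFun (congrFun hzero i) j
      simp only [Matrix.map_apply, Matrix.sub_apply, Matrix.transpose_apply,
        Matrix.zero_apply, Complex.ofRealHom_eq_coe] at h0 ⊢
      exact_mod_cast h0
    have := sub_eq_zero.mp this
    exact this.symm
  have hXs : Xstarᵀ = Xstar := hsym
  -- gradient identities
  have hK : R₁ * Kstar = B₁ᵀ * Xstar * As := sub_eq_zero.mp hgradK
  have hL : -(R₂ * Lstar) = B₂ᵀ * Xstar * As := sub_eq_zero.mp hgradL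
  -- M * [K; L] = [B₁ᵀXA; B₂ᵀXA]
  have c1 : (R₁ + B₁ᵀ * Xstar * B₁) * Kstar + B₁ᵀ * Xstar * B₂ * Lstar = B₁ᵀ * Xstar * A := by
    rw [Matrix.add_mul, hK, hAs]
    simp only [Matrix.mul_sub, Matrix.mul_assoc]
    abel
  have c2 : B₂ᵀ * Xstar * B₁ * Kstar + (-R₂ + B₂ᵀ * Xstar * B₂) * Lstar = B₂ᵀ * Xstar * A := by
    rw [Matrix.add_mul, Matrix.neg_mul, hL, hAs]
    simp only [Matrix.mul_sub, Matrix.mul_assoc]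
    abel
  have hw : M * Matrix.fromRows Kstar Lstar
      = Matrix.fromRows (B₁ᵀ * Xstar * A) (B₂ᵀ * Xstar * A) := by
    rw [hM, Matrix.fromBlocks_mul_fromRows, c1, c2]
  have hMdet : IsUnit M.det := (Matrix.isUnit_iff_isUnit_det M).mp hMinv
  have hinvu : M⁻¹ * Matrix.fromRows (B₁ᵀ * Xstar * A) (B₂ᵀ * Xstar * A)
      = Matrix.fromRows Kstar Lstar := by
    rw [← hw, Matrix.nonsing_inv_mul_cancel_left _ _ hMdet]
  have huu : (Matrix.fromRows (B₁ᵀ * Xstar * A) (B₂ᵀ * Xstar * A))ᵀ * M⁻¹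
        * Matrix.fromRows (B₁ᵀ * Xstar * A) (B₂ᵀ * Xstar * A)
      = Aᵀ * Xstar * (B₁ * Kstar) + Aᵀ * Xstar * (B₂ * Lstar) := by
    conv_lhs => rw [Matrix.mul_assoc, hinvu]
    rw [Matrix.transpose_fromRows, Matrix.fromCols_mul_fromRows]
    simp only [Matrix.transpose_mul, Matrix.transpose_transpose, hXs, Matrix.mul_assoc]
  have e1 : Aᵀ * Xstar * As = Asᵀ * Xstar * As + Kstarᵀ * (B₁ᵀ * Xstar * As)
      + Lstarᵀ * (B₂ᵀ * Xstar * As) := by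
    have hA : A = As + B₁ * Kstar + B₂ * Lstar := by rw [hAs]; noncomm_ring
    conv_lhs => rw [hA]
    simp only [Matrix.transpose_add, Matrix.transpose_mul, Matrix.add_mul, Matrix.mul_assoc]
  have hkey : Aᵀ * Xstar * As + Q - Xstar = 0 := by
    rw [e1, ← hK, ← hL]
    have : Asᵀ * Xstar * As + Kstarᵀ * (R₁ * Kstar) + Lstarᵀ * -(R₂ * Lstar) + Q - Xstar
        = (Asᵀ * Xstar * As + Q + Kstarᵀ * R₁ * Kstar - Lstarᵀ * R₂ * Lstar) - Xstar := by
      simp only [Matrix.mul_neg, Matrix.mul_assoc]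
      abel
    rw [this, hX, sub_self]
  refine ⟨hsym, ?_⟩
  rw [huu]
  have : Aᵀ * Xstar * A - Xstar + Q - (Aᵀ * Xstar * (B₁ * Kstar) + Aᵀ * Xstar * (B₂ * Lstar))
      = Aᵀ * Xstar * As + Q - Xstar := by
    rw [hAs]
    simp only [Matrix.mul_sub, Matrix.mul_assoc]
    abel
  rw [this, hkey]
end
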